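/- arXiv:1804.05758 — 8 statements merged into one kernel-verified Lean document; each statement's English description precedes it below -/
import Mathlib

section
/- Let κ ≤ λ be infinite cardinals with κ regular and λ^{<κ} = λ. Then there is a family I of subsets of λ with |I| = 2^λ such that for every pair of disjoint subfamilies A, B ⊆ I with |A| < κ, |B| < κ and A ≠ ∅, the set (⋂_{X∈A} X) \ (⋃_{Y∈B} Y) has cardinality exactly λ. -/
open Cardinal

open Set

universe u

private lemma fkh_small_sets (κ : Cardinal.{u}) (hinf : ℵ₀ ≤ κ) {β : Type u}
    (hbinf : ℵ₀ ≤ #β) (hk : κ ≤ #β) (hpow : #β ^< κ = #β) :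
    #{s : Set β // #s < κ} = #β := by
  haveI : Infinite β := Cardinal.infinite_iff.mpr hbinf
  apply le_antisymm
  · set iso := (Ordinal.ToType.mk : Set.Iio κ.ord ≃o κ.ord.ToType) with hiso
    set g : κ.ord.ToType → Cardinal.{u} := fun b => ((iso.symm b : Set.Iio κ.ord) : Ordinal).card
      with hg
    have hglt : ∀ b, g b < κ := fun b => Cardinal.lt_ord.1 (iso.symm b).2
    have hmap : ∀ s : {s : Set β // #s < κ}, (#(s.1)).ord < κ.ord :=
      fun s => Cardinal.ord_lt_ord.2 s.2
    let f : {s : Set β // #s < κ} → Σ b : κ.ord.ToType, {t : Set β // #t ≤ g b} :=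
      fun s => ⟨iso ⟨(#(s.1)).ord, hmap s⟩, ⟨s.1, by
        simp only [hg, iso.symm_apply_apply, Cardinal.card_ord, le_refl]⟩⟩
    have hf : Function.Injective f := by
      intro s t h
      exact Subtype.ext (congrArg (fun p : Σ b : κ.ord.ToType, {t : Set β // #t ≤ g b} =>
        (p.2.1 : Set β)) h)
    calc #{s : Set β // #s < κ} ≤ #(Σ b : κ.ord.ToType, {t : Set β // #t ≤ g b}) :=
          Cardinal.mk_le_of_injective hf
      _ = Cardinal.sum (fun b => #{t : Set β // #t ≤ g b}) := Cardinal.mk_sigma _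
      _ ≤ Cardinal.sum (fun _ : κ.ord.ToType => #β) := by
          apply Cardinal.sum_le_sum
          intro b
          calc #{t : Set β // #t ≤ g b} ≤ #β ^ g b := Cardinal.mk_bounded_set_le_of_infinite β _
            _ ≤ #β ^< κ := Cardinal.le_powerlt _ (hglt b)
            _ = #β := hpow
      _ = #(κ.ord.ToType) * #β := Cardinal.sum_const' _ _
      _ = κ * #β := by rw [mk_toType, Cardinal.card_ord]
      _ = #β := by rw [Cardinal.mul_eq_max hinf hbinf]; exact max_eq_right hk
  · have hf : Function.Injective (fun x : β => (⟨{x}, by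
        rw [Cardinal.mk_singleton]
        exact lt_of_lt_of_le Cardinal.one_lt_aleph0 hinf⟩ : {s : Set β // #s < κ})) :=
      fun x y h => Set.singleton_injective (congrArg Subtype.val h)
    exact Cardinal.mk_le_of_injective hf

/-- **Fichtenholz–Kantorovich–Hausdorff lemma.**
Let `κ ≤ lam` be infinite cardinals with `κ` regular and `lam ^< κ = lam` (the set of size
`lam` is represented by a type `α` of cardinality `lam`).  Then there is a family `I` of
subsets of `α` with `|I| = 2 ^ lam` which is `κ`-independent: for all disjoint subfamilies
`A, B ⊆ I` with `|A|, |B| < κ` and `A ≠ ∅`, the set `(⋂ A) \ (⋃ B)` has cardinality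
exactly `lam`. -/
theorem statement0 {α : Type u} (κ : Cardinal.{u})
    (hreg : κ.IsRegular) (hinf : ℵ₀ ≤ κ) (hainf : ℵ₀ ≤ #α) (hka : κ ≤ #α)
    (hpow : #α ^< κ = #α) :
    ∃ I : Set (Set α), #I = 2 ^ #α ∧
      ∀ A B : Set (Set α), A ⊆ I → B ⊆ I → Disjoint A B →
        #A < κ → #B < κ → A.Nonempty →
          #(⋂₀ A \ ⋃₀ B : Set α) = #α := by
  haveI : Infinite α := Cardinal.infinite_iff.mpr hainf
  set Q := {s : Set α // #s < κ} with hQdef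
  have hQ : #Q = #α := fkh_small_sets κ hinf hainf hka hpow
  set R := {F : Set Q // #F < κ} with hRdef
  have hR : #R = #α := by
    have h1 : ℵ₀ ≤ #Q := by rw [hQ]; exact hainf
    have h2 : κ ≤ #Q := by rw [hQ]; exact hka
    have h3 : #Q ^< κ = #Q := by rw [hQ]; exact hpow
    rw [fkh_small_sets κ hinf h1 h2 h3, hQ]
  set T := Q × R with hTdef
  have hT : #T = #α := by
    have : #T = #Q * #R := by
      rw [hTdef, Cardinal.mk_prod, Cardinal.lift_id, Cardinal.lift_id]
    rw [this, hQ, hR, Cardinal.mul_eq_self hainf]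
  have hinter : ∀ (X : Set α) (s : Q), #(X ∩ (s : Set α) : Set α) < κ := fun X s =>
    lt_of_le_of_lt (Cardinal.mk_le_mk_of_subset Set.inter_subset_right) s.2
  set P : Set α → T → Prop := fun X p => (⟨X ∩ (p.1 : Set α), hinter X p.1⟩ : Q) ∈ (p.2 : Set Q)
    with hPdef
  set U : Set α → Set T := fun X => {p | P X p} with hUdef
  -- core independence lemma at the level of `T`
  have core : ∀ 𝒜 ℬ : Set (Set α), #𝒜 < κ → #ℬ < κ → 𝒜.Nonempty →
      (∀ X ∈ 𝒜, ∀ Y ∈ ℬ, X ≠ Y) →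
      #({p : T | (∀ X ∈ 𝒜, P X p) ∧ ∀ Y ∈ ℬ, ¬ P Y p}) = #α := by
    intro 𝒜 ℬ hA hB hAne hd
    have sep : ∀ X ∈ 𝒜, ∀ Y ∈ ℬ, ∃ z, (z ∈ X ∧ z ∉ Y) ∨ (z ∈ Y ∧ z ∉ X) := by
      intro X hX Y hY
      by_contra h
      push_neg at h
      exact hd X hX Y hY (Set.ext fun z => ⟨(h z).1, (h z).2⟩)
    choose z hz using fun (X : 𝒜) (Y : ℬ) => sep X.1 X.2 Y.1 Y.2
    set s₀ : Set α := Set.range (fun q : 𝒜 × ℬ => z q.1 q.2) with hs₀def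
    have hs₀ : #s₀ < κ := by
      refine lt_of_le_of_lt Cardinal.mk_range_le ?_
      have : #(↥𝒜 × ↥ℬ) = #𝒜 * #ℬ := by
        rw [Cardinal.mk_prod, Cardinal.lift_id, Cardinal.lift_id]
      rw [this]
      exact Cardinal.mul_lt_of_lt hinf hA hB
    have hsize : ∀ x : α, #(s₀ ∪ {x} : Set α) < κ := by
      intro x
      refine lt_of_le_of_lt (Cardinal.mk_union_le _ _) ?_
      rw [Cardinal.mk_singleton]
      exact Cardinal.add_lt_of_lt hinf hs₀ (lt_of_lt_of_le Cardinal.one_lt_aleph0 hinf)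
    set sx : α → Q := fun x => ⟨s₀ ∪ {x}, hsize x⟩ with hsxdef
    set fx : α → Set α → Q := fun x X => ⟨X ∩ (s₀ ∪ {x}), hinter X (sx x)⟩ with hfxdef
    have hFsize : ∀ x, #(fx x '' 𝒜) < κ := fun x => lt_of_le_of_lt Cardinal.mk_image_le hA
    set pt : α → T := fun x => ⟨sx x, ⟨fx x '' 𝒜, hFsize x⟩⟩ with hptdef
    have hmem : ∀ x, pt x ∈ {p : T | (∀ X ∈ 𝒜, P X p) ∧ ∀ Y ∈ ℬ, ¬ P Y p} := by
      intro x
      constructor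
      · intro X hX
        exact ⟨X, hX, rfl⟩
      · rintro Y hY ⟨X, hX, hXY⟩
        have heq : X ∩ (s₀ ∪ {x}) = Y ∩ (s₀ ∪ {x}) := congrArg Subtype.val hXY
        have hzz := hz ⟨X, hX⟩ ⟨Y, hY⟩
        have hw : z ⟨X, hX⟩ ⟨Y, hY⟩ ∈ s₀ ∪ {x} :=
          Or.inl ⟨(⟨X, hX⟩, ⟨Y, hY⟩), rfl⟩
        rcases hzz with ⟨hwX, hwY⟩ | ⟨hwY, hwX⟩
        · have : z ⟨X, hX⟩ ⟨Y, hY⟩ ∈ Y ∩ (s₀ ∪ {x}) := heq ▸ ⟨hwX, hw⟩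
          exact hwY this.1
        · have : z ⟨X, hX⟩ ⟨Y, hY⟩ ∈ X ∩ (s₀ ∪ {x}) := heq ▸ ⟨hwY, hw⟩
          exact hwX this.1
    apply le_antisymm
    · rw [← hT]; exact Cardinal.mk_set_le _
    · have hinj : Function.Injective
          (fun x : (s₀ᶜ : Set α) =>
            (⟨pt x.1, hmem x.1⟩ : {p : T | (∀ X ∈ 𝒜, P X p) ∧ ∀ Y ∈ ℬ, ¬ P Y p})) := by
        intro x y h
        have h0 : pt x.1 = pt y.1 := congrArg Subtype.val h
        have h1 : s₀ ∪ {x.1} = s₀ ∪ {y.1} :=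
          congrArg (fun p : T => (p.1 : Set α)) h0
        have h2 : x.1 ∈ s₀ ∪ {y.1} := h1 ▸ (Or.inr rfl : x.1 ∈ s₀ ∪ {x.1})
        rcases h2 with h' | h'
        · exact absurd h' x.2
        · exact Subtype.ext h'
      have hle := Cardinal.mk_le_of_injective hinj
      rwa [Cardinal.mk_compl_of_infinite s₀ (lt_of_lt_of_le hs₀ hka)] at hle
  obtain ⟨e⟩ : Nonempty (T ≃ α) := Cardinal.eq.1 hT
  set S : Set α → Set α := fun X => e '' (U X) with hSdef
  have hsingle : ∀ X : Set α, #({X} : Set (Set α)) < κ := by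
    intro X
    rw [Cardinal.mk_singleton]
    exact lt_of_lt_of_le Cardinal.one_lt_aleph0 hinf
  have hSinj : Function.Injective S := by
    intro X Y hXY
    by_contra hne
    have hc := core {X} {Y} (hsingle X) (hsingle Y) (Set.singleton_nonempty X)
      (by rintro X' rfl Y' rfl; exact hne)
    have hne' : ({p : T | (∀ X' ∈ ({X} : Set (Set α)), P X' p) ∧
        ∀ Y' ∈ ({Y} : Set (Set α)), ¬ P Y' p}).Nonempty := by
      rw [← Set.nonempty_coe_sort, ← Cardinal.mk_ne_zero_iff, hc]
      exact Cardinal.mk_ne_zero α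
    obtain ⟨p, hp⟩ := hne'
    have hUeq : U X = U Y := Set.image_injective.2 e.injective hXY
    have hPX : P X p := hp.1 X rfl
    have hPY : p ∈ U Y := hUeq ▸ hPX
    exact hp.2 Y rfl hPY
  refine ⟨Set.range S, ?_, ?_⟩
  · rw [Cardinal.mk_range_eq S hSinj, Cardinal.mk_set]
  · intro A B hAI hBI hdisj hA hB hAne
    set 𝒜 := S ⁻¹' A with h𝒜def
    set ℬ := S ⁻¹' B with hℬdef
    have hApre : S '' 𝒜 = A := Set.image_preimage_eq_of_subset hAI
    have hBpre : S '' ℬ = B := Set.image_preimage_eq_of_subset hBI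
    have hA' : #𝒜 < κ := by
      rw [h𝒜def, Cardinal.mk_preimage_of_injective_of_subset_range S A hSinj hAI]
      exact hA
    have hB' : #ℬ < κ := by
      rw [hℬdef, Cardinal.mk_preimage_of_injective_of_subset_range S B hSinj hBI]
      exact hB
    have hAne' : 𝒜.Nonempty := by
      rw [← hApre] at hAne
      exact hAne.of_image
    have hdist : ∀ X ∈ 𝒜, ∀ Y ∈ ℬ, X ≠ Y := by
      rintro X hX Y hY rfl
      exact Set.disjoint_left.1 hdisj hX hY
    have hcore := core 𝒜 ℬ hA' hB' hAne' hdist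
    have hmemS : ∀ (X : Set α) (a : α), a ∈ S X ↔ P X (e.symm a) := by
      intro X a
      show a ∈ e '' U X ↔ _
      rw [Equiv.image_eq_preimage_symm]
      exact Iff.rfl
    have himg : ⋂₀ A \ ⋃₀ B =
        e '' {p : T | (∀ X ∈ 𝒜, P X p) ∧ ∀ Y ∈ ℬ, ¬ P Y p} := by
      rw [← hApre, ← hBpre]
      ext a
      constructor
      · rintro ⟨h1, h2⟩
        refine ⟨e.symm a, ⟨?_, ?_⟩, e.apply_symm_apply a⟩
        · intro X hX
          exact (hmemS X a).1 (h1 _ (Set.mem_image_of_mem S hX))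
        · intro Y hY hP
          exact h2 ⟨S Y, Set.mem_image_of_mem S hY, (hmemS Y a).2 hP⟩
      · rintro ⟨p, hp, rfl⟩
        constructor
        · rintro t ⟨X, hX, rfl⟩
          refine (hmemS X (e p)).2 ?_
          rw [Equiv.symm_apply_apply]
          exact hp.1 X hX
        · rintro ⟨t, ⟨Y, hY, rfl⟩, hat⟩
          have := (hmemS Y (e p)).1 hat
          rw [Equiv.symm_apply_apply] at this
          exact hp.2 Y hY this
    rw [himg, Cardinal.mk_image_eq e.injective, hcore]
end

section
/- Let κ ≤ λ be infinite cardinals with κ regular and λ^{<κ} = λ. Let J = {⟨X, Z⟩ : X ⊆ λ, |X| < κ, Z ⊆ 𝒫(X), |Z| < κ}, and for each A ⊆ λ let I(A) = {⟨X, Z⟩ ∈ J : A ∩ X ∈ Z}. Then |J| = λ, the map A ↦ I(A) is injective on 𝒫(λ), and the family {I(A) : A ⊆ λ} is a κ-independent family of subsets of J of cardinality 2^λ: for disjoint subfamilies {I(A_α) : α < ρ} and {I(B_β) : β < ζ} with ρ, ζ < κ, A_α ≠ B_β for all α, β, and with the convention that the empty intersection equals J, the set (⋂_{α<ρ} I(A_α))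 \ (⋃_{β<ζ} I(B_β)) has cardinality λ. -/
open Cardinal

/-- The set `J = {⟨X, Z⟩ : X ⊆ lam, |X| < κ, Z ⊆ 𝒫(X), |Z| < κ}`, where the underlying
set of size `lam` is represented by the type `α`. -/
def Jset (κ : Cardinal.{u}) (α : Type u) : Set (Set α × Set (Set α)) :=
  {p | #p.1 < κ ∧ p.2 ⊆ 𝒫 p.1 ∧ #p.2 < κ}

/-- For `A ⊆ lam`, the set `I(A) = {⟨X, Z⟩ ∈ J : A ∩ X ∈ Z}`. -/
def Iset (κ : Cardinal.{u}) {α : Type u} (A : Set α) : Set (Set α × Set (Set α)) :=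
  {p ∈ Jset κ α | A ∩ p.1 ∈ p.2}

lemma exists_mk_Iio_eq {κ c : Cardinal.{u}} (hc : c < κ) :
    ∃ i : κ.ord.ToType, #(Set.Iio i) = c := by
  obtain ⟨i, hi⟩ := @Ordinal.typein_surj κ.ord.ToType (· < ·) isWellOrder_lt c.ord
    (by rw [Ordinal.type_toType]; exact Cardinal.ord_lt_ord.2 hc)
  refine ⟨i, ?_⟩
  have h2 := (@Ordinal.card_typein κ.ord.ToType (· < ·) isWellOrder_lt i).symm
  rw [hi, Cardinal.card_ord] at h2
  exact h2

lemma mk_small_subsets_le {β : Type u} {κ lam : Cardinal.{u}} (hκ : ℵ₀ ≤ κ)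
    (hlam : ℵ₀ ≤ lam) (hκlam : κ ≤ lam) (hβ : #β ≤ lam) (hpow : lam ^< κ = lam) :
    #{s : Set β | #s < κ} ≤ lam := by
  haveI : Nonempty κ.ord.ToType := Cardinal.mk_ne_zero_iff.1
    (by rw [mk_ord_toType]; exact (aleph0_pos.trans_le hκ).ne')
  have cover : {s : Set β | #s < κ} ⊆ ⋃ i : κ.ord.ToType, {s : Set β | #s ≤ #(Set.Iio i)} := by
    intro s hs
    obtain ⟨i, hi⟩ := exists_mk_Iio_eq hs
    exact Set.mem_iUnion.2 ⟨i, hi.ge⟩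
  refine (Cardinal.mk_le_mk_of_subset cover).trans ((Cardinal.mk_iUnion_le _).trans ?_)
  have hb : max #β ℵ₀ ≤ lam := max_le hβ hlam
  have hbd : ∀ i : κ.ord.ToType, #{s : Set β | #s ≤ #(Set.Iio i)} ≤ lam := fun i =>
    calc #{s : Set β | #s ≤ #(Set.Iio i)} ≤ max #β ℵ₀ ^ #(Set.Iio i) := mk_bounded_set_le β _
    _ ≤ lam ^ #(Set.Iio i) := power_le_power_right hb
    _ ≤ lam ^< κ := le_powerlt lam (mk_Iio_ord_toType i)
    _ = lam := hpow
  calc #κ.ord.ToType * (⨆ i, #{s : Set β | #s ≤ #(Set.Iio i)}) ≤ lam * lam :=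
        mul_le_mul' ((mk_ord_toType κ).le.trans hκlam) (ciSup_le' hbd)
    _ = lam := Cardinal.mul_eq_self hlam

/-- Let `κ ≤ lam` be infinite cardinals with `κ` regular and `lam ^< κ = lam`.  Then
`|J| = lam`, the map `A ↦ I(A)` is injective, the family `{I(A) : A ⊆ lam}` has
cardinality `2 ^ lam`, and it is `κ`-independent as a family of subsets of `J`:
for disjoint subfamilies `{I(A i)}` and `{I(B i)}` of size `< κ` (i.e. `A i ≠ B j`
for all `i, j`), with the convention that the empty intersection is `J`, the set
`(J ∩ ⋂ i, I(A i)) \ ⋃ j, I(B j)` has cardinality `lam`. -/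
theorem statement1 {α : Type u} (κ : Cardinal.{u})
    (hreg : κ.IsRegular) (hinf : ℵ₀ ≤ κ) (hainf : ℵ₀ ≤ #α) (hka : κ ≤ #α)
    (hpow : #α ^< κ = #α) :
    #(Jset κ α) = #α ∧
    Function.Injective (fun A : Set α => Iset κ A) ∧
    #(Set.range fun A : Set α => Iset κ A) = 2 ^ #α ∧
    ∀ (ιA ιB : Type u) (A : ιA → Set α) (B : ιB → Set α),
      #ιA < κ → #ιB < κ → (∀ i j, A i ≠ B j) →
        #(((Jset κ α ∩ ⋂ i, Iset κ (A i)) \ ⋃ j, Iset κ (B j) :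
            Set (Set α × Set (Set α)))) = #α := by
  classical
  haveI : Infinite α := Cardinal.infinite_iff.2 hainf
  have hone : (1 : Cardinal.{u}) < κ := one_lt_aleph0.trans_le hinf
  -- Part 1 : |J| = #α
  have hS1 : #{X : Set α | #X < κ} ≤ #α :=
    mk_small_subsets_le hinf hainf hka le_rfl hpow
  have hSW : #{W : Set ↥{s : Set α | #s < κ} | #W < κ} ≤ #α :=
    mk_small_subsets_le hinf hainf hka hS1 hpow
  have hJle : #(Jset κ α) ≤ #α := by
    set β := ↥{s : Set α | #s < κ}
    have hsmall : ∀ p : Jset κ α, ∀ s ∈ (p : Set α × Set (Set α)).2, #s < κ := by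
      rintro ⟨p, hp⟩ s hs
      exact (Cardinal.mk_le_mk_of_subset (hp.2.1 hs)).trans_lt hp.1
    have hF : Function.Injective (fun p : Jset κ α =>
        ((⟨(p : Set α × Set (Set α)).1, p.2.1⟩ : {X : Set α | #X < κ}),
         (⟨Subtype.val ⁻¹' (p : Set α × Set (Set α)).2,
            (Cardinal.mk_preimage_of_injective _ _ Subtype.val_injective).trans_lt p.2.2.2⟩ :
            {W : Set β | #W < κ}))) := by
      rintro ⟨⟨X, Z⟩, hp⟩ ⟨⟨X', Z'⟩, hp'⟩ h
      have h1 : X = X' := congrArg (fun q => (q.1 : Set α)) h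
      have h2 : (Subtype.val ⁻¹' Z : Set β) = Subtype.val ⁻¹' Z' :=
        congrArg (fun q => (q.2 : Set β)) h
      refine Subtype.ext (Prod.ext h1 ?_)
      ext s
      constructor
      · intro hs
        have hsk : #s < κ := hsmall ⟨(X, Z), hp⟩ s hs
        have : (⟨s, hsk⟩ : β) ∈ (Subtype.val ⁻¹' Z : Set β) := hs
        rw [h2] at this; exact this
      · intro hs
        have hsk : #s < κ := hsmall ⟨(X', Z'), hp'⟩ s hs
        have : (⟨s, hsk⟩ : β) ∈ (Subtype.val ⁻¹' Z' : Set β) := hs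
        rw [← h2] at this; exact this
    calc #(Jset κ α) ≤ #({X : Set α | #X < κ} × {W : Set β | #W < κ}) :=
          Cardinal.mk_le_of_injective hF
      _ = #{X : Set α | #X < κ} * #{W : Set β | #W < κ} :=
          (Cardinal.mk_prod _ _).trans (by rw [Cardinal.lift_id, Cardinal.lift_id])
      _ ≤ #α * #α := mul_le_mul' hS1 hSW
      _ = #α := Cardinal.mul_eq_self hainf
  have hJge : #α ≤ #(Jset κ α) := by
    have hmem : ∀ x : α, (({x}, (∅ : Set (Set α))) : Set α × Set (Set α)) ∈ Jset κ α := by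
      intro x
      refine ⟨?_, by simp, ?_⟩
      · rw [Cardinal.mk_singleton]; exact hone
      · rw [Cardinal.mk_emptyCollection]; exact aleph0_pos.trans_le hinf
    have : Function.Injective (fun x : α => (⟨({x}, ∅), hmem x⟩ : Jset κ α)) := by
      intro x y h
      have : ({x} : Set α) = {y} :=
        congrArg (fun p : Jset κ α => (p : Set α × Set (Set α)).1) h
      simpa using this
    exact Cardinal.mk_le_of_injective this
  have hJ : #(Jset κ α) = #α := le_antisymm hJle hJge
  -- Part 2 : injectivity
  have hIinj : Function.Injective (fun A : Set α => Iset κ A) := by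
    intro A B h
    simp only at h
    ext z
    have hpA : (({z}, ({A ∩ {z}} : Set (Set α))) : Set α × Set (Set α)) ∈ Iset κ A := by
      refine ⟨⟨?_, ?_, ?_⟩, Set.mem_singleton _⟩
      · rw [Cardinal.mk_singleton]; exact hone
      · intro s hs; rw [Set.mem_singleton_iff] at hs; subst hs
        exact Set.inter_subset_right
      · rw [Cardinal.mk_singleton]; exact hone
    have hpB := h ▸ hpA
    have heq : B ∩ {z} = A ∩ {z} := Set.mem_singleton_iff.1 hpB.2
    constructor
    · intro hz
      have : z ∈ A ∩ {z} := ⟨hz, rfl⟩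
      rw [← heq] at this; exact this.1
    · intro hz
      have : z ∈ B ∩ {z} := ⟨hz, rfl⟩
      rw [heq] at this; exact this.1
  refine ⟨hJ, hIinj, ?_, ?_⟩
  · rw [Cardinal.mk_range_eq _ hIinj, Cardinal.mk_set]
  -- Part 4 : independence
  intro ιA ιB A B hA hB hAB
  have hx : ∀ ij : ιA × ιB, ∃ a, a ∈ symmDiff (A ij.1) (B ij.2) := fun ij =>
    Set.symmDiff_nonempty.2 (hAB ij.1 ij.2)
  set x : ιA × ιB → α := fun ij => (hx ij).choose with hxdef
  have hxmem : ∀ ij : ιA × ιB, x ij ∈ symmDiff (A ij.1) (B ij.2) := fun ij => (hx ij).choose_spec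
  set X0 : Set α := Set.range x with hX0def
  have hX0 : #X0 < κ := by
    refine Cardinal.mk_range_le.trans_lt ?_
    rw [(Cardinal.mk_prod ιA ιB).trans (by rw [Cardinal.lift_id, Cardinal.lift_id])]
    exact Cardinal.mul_lt_of_lt hinf hA hB
  set D := ((Jset κ α ∩ ⋂ i, Iset κ (A i)) \ ⋃ j, Iset κ (B j) : Set (Set α × Set (Set α)))
    with hDdef
  have hupper : #D ≤ #α := by
    rw [← hJ]
    exact Cardinal.mk_le_mk_of_subset (Set.diff_subset.trans Set.inter_subset_left)
  have hlower : #α ≤ #D := by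
    have hmem : ∀ y : α, y ∉ X0 →
        ((insert y X0, Set.range fun i : ιA => A i ∩ insert y X0) :
          Set α × Set (Set α)) ∈ D := by
      intro y hy
      have hcard : #(insert y X0 : Set α) < κ := by
        rw [Cardinal.mk_insert hy]
        exact Cardinal.add_lt_of_lt hinf hX0 hone
      have hJm : ((insert y X0, Set.range fun i : ιA => A i ∩ insert y X0) :
          Set α × Set (Set α)) ∈ Jset κ α := by
        refine ⟨hcard, ?_, Cardinal.mk_range_le.trans_lt hA⟩
        rintro s ⟨i, rfl⟩
        exact Set.inter_subset_right
      refine ⟨⟨hJm, Set.mem_iInter.2 fun i => ⟨hJm, ⟨i, rfl⟩⟩⟩, ?_⟩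
      intro hcon
      obtain ⟨j, hj⟩ := Set.mem_iUnion.1 hcon
      obtain ⟨i, hi⟩ := hj.2
      have hxX : x (i, j) ∈ insert y X0 := Set.mem_insert_iff.2 (Or.inr ⟨(i, j), rfl⟩)
      have hi' : A i ∩ insert y X0 = B j ∩ insert y X0 := hi
      have hiff : x (i, j) ∈ A i ∩ insert y X0 ↔ x (i, j) ∈ B j ∩ insert y X0 := by rw [hi']
      have hsd := hxmem (i, j)
      rw [Set.mem_symmDiff] at hsd
      rcases hsd with ⟨ha, hb⟩ | ⟨hb, ha⟩
      · exact hb (hiff.1 ⟨ha, hxX⟩).1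
      · exact ha (hiff.2 ⟨hb, hxX⟩).1
    have hinj2 : Function.Injective (fun y : ↥X0ᶜ =>
        (⟨(insert (y : α) X0, Set.range fun i : ιA => A i ∩ insert (y : α) X0),
          hmem y y.2⟩ : D)) := by
      intro y y' h
      have h1 : insert (y : α) X0 = insert (y' : α) X0 :=
        congrArg (fun q : D => (q : Set α × Set (Set α)).1) h
      have : (y : α) ∈ insert (y' : α) X0 := h1 ▸ Set.mem_insert _ _
      rcases Set.mem_insert_iff.1 this with h2 | h2
      · exact Subtype.ext h2
      · exact absurd h2 y.2
    calc #α = #(↥X0ᶜ) := (Cardinal.mk_compl_of_infinite X0 (hX0.trans_le hka)).symm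
      _ ≤ #D := Cardinal.mk_le_of_injective hinj2
  exact le_antisymm hupper hlower
end

section
/- Let κ ≤ λ be infinite cardinals with κ regular and uncountable, and let ⟨A_δ : δ < 2^λ⟩ be a κ-independent family of subsets of λ (for every Γ ⊆ 2^λ with |Γ| < κ and every s : Γ → {0,1}, the set A(s) = (⋂_{α∈Γ, s(α)=1} A_α) \ (⋃_{β∈Γ, s(β)=0} A_β) is nonempty). Define ι on L_{κ,1} propositional formulas over the variables {a_δ : δ < 2^λ} recursively by ι(a_δ) = A_δ, ι(¬φ) = λ \ ι(φ), and ι(⋀_{i<η} φ_i) = ⋂_{i<η} ι(φ_i). For a formula φ let Γ_φ be the set of indices of variables occurring in φ, and for s : Γ → {0,1} with Γ ⊇ Γ_φ let s(φ) ∈ {0,1} be the truth value of φ under the assignment s. Then for every formula φ and every Γ ⊇ Γ_φ with |Γ| < κ, ι(φ) = ⋃{A(s) : s ∈ {0,1}^Γ, s(φ) = 1}. -/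
open Cardinal

/-- Propositional formulas of the logic `L_{κ,1}` over a set `V` of propositional
variables: the least class containing the variables and closed under negation and
under conjunctions (here of arbitrary index type; the size restriction `< κ` is the
predicate `PropForm.Small` below). -/
inductive PropForm (V : Type u) : Type (u + 1)
  | var : V → PropForm V
  | neg : PropForm V → PropForm V
  | conj : (ι : Type u) → (ι → PropForm V) → PropForm V

namespace PropForm

/-- A formula is in `L_{κ,1}` when all of its conjunctions have fewer than `κ` conjuncts. -/
def Small (κ : Cardinal.{u}) {V : Type u} : PropForm V → Prop
  | var _ => True
  | neg φ => φ.Small κ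
  | conj ι f => #ι < κ ∧ ∀ i, (f i).Small κ

/-- The set of propositional variables occurring in a formula. -/
def vars {V : Type u} : PropForm V → Set V
  | var x => {x}
  | neg φ => φ.vars
  | conj _ f => ⋃ i, (f i).vars

/-- Truth of a formula under a (total) truth assignment `v : V → Bool`, evaluated
recursively; a conjunction is true iff all conjuncts are true. -/
def Sat {V : Type u} (v : V → Bool) : PropForm V → Prop
  | var x => v x = true
  | neg φ => ¬ φ.Sat v
  | conj _ f => ∀ i, (f i).Sat v

/-- Truth of a formula under a partial truth assignment `s : Γ → Bool`; this is the
truth value `s(φ)` when all variables of `φ` lie in `Γ`. -/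
def SatOn {V : Type u} {Γ : Set V} (s : Γ → Bool) : PropForm V → Prop
  | var x => ∃ h : x ∈ Γ, s ⟨x, h⟩ = true
  | neg φ => ¬ φ.SatOn s
  | conj _ f => ∀ i, (f i).SatOn s

/-- The interpretation map `ι` sending a propositional formula to a subset of `α`,
determined by `ι(a δ) = A δ`, `ι(¬φ) = α \ ι(φ)`, and `ι(⋀ᵢ φᵢ) = ⋂ᵢ ι(φᵢ)`. -/
def interp {V α : Type u} (A : V → Set α) : PropForm V → Set α
  | var x => A x
  | neg φ => (φ.interp A)ᶜ
  | conj _ f => ⋂ i, (f i).interp A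

end PropForm

/-- For a family `A : V → Set α`, `Γ ⊆ V`, and `s : Γ → Bool`, the set
`A(s) = (⋂_{γ ∈ Γ, s γ = 1} A γ) \ (⋃_{γ ∈ Γ, s γ = 0} A γ)`, with the convention that
the empty intersection is all of `α`. -/
def Aset {V α : Type u} (A : V → Set α) (Γ : Set V) (s : Γ → Bool) : Set α :=
  (⋂ γ : {g : Γ // s g = true}, A γ.1.1) \ (⋃ γ : {g : Γ // s g = false}, A γ.1.1)

/-- Let `κ ≤ lam` be infinite cardinals with `κ` regular and uncountable, and let
`A : V → Set α` (with `|V| = 2 ^ lam`, `|α| = lam`) be a `κ`-independent family.  Then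
for every `L_{κ,1}` formula `φ` and every `Γ ⊇ vars φ` with `|Γ| < κ`,
`ι(φ) = ⋃ {A(s) : s : Γ → Bool, s(φ) = 1}`. -/
theorem statement3 {V α : Type u} (κ : Cardinal.{u})
    (hreg : κ.IsRegular) (hunc : ℵ₀ < κ) (hainf : ℵ₀ ≤ #α) (hka : κ ≤ #α)
    (hV : #V = 2 ^ #α) (A : V → Set α)
    (hind : ∀ (Γ : Set V), #Γ < κ → ∀ s : Γ → Bool, (Aset A Γ s).Nonempty)
    (φ : PropForm V) (hφ : φ.Small κ)
    (Γ : Set V) (hΓφ : φ.vars ⊆ Γ) (hΓ : #Γ < κ) :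
    φ.interp A = ⋃ (s : Γ → Bool) (_ : φ.SatOn s), Aset A Γ s := by
  classical
  have key : ∀ (ψ : PropForm V), ψ.vars ⊆ Γ → ∀ x : α,
      (x ∈ ψ.interp A ↔ ψ.SatOn (fun γ : Γ => decide (x ∈ A γ.1))) := by
    intro ψ
    induction ψ with
    | var v =>
      intro hsub x
      have hv : v ∈ Γ := hsub rfl
      constructor
      · intro hx; exact ⟨hv, by simpa [PropForm.interp] using hx⟩
      · rintro ⟨h, hs⟩; simpa [PropForm.interp] using hs
    | neg ψ ih =>
      intro hsub x
      simpa [PropForm.interp, PropForm.SatOn] using (ih hsub x).not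
    | conj ι f ih =>
      intro hsub x
      simp only [PropForm.interp, PropForm.SatOn, Set.mem_iInter]
      exact forall_congr' fun i =>
        ih i (fun v hv => hsub (Set.mem_iUnion.2 ⟨i, hv⟩)) x
  have hmem : ∀ (s : Γ → Bool) (x : α), x ∈ Aset A Γ s ↔
      ∀ γ : Γ, (s γ = true ↔ x ∈ A γ.1) := by
    intro s x
    constructor
    · rintro ⟨h1, h2⟩ γ
      constructor
      · intro hs
        exact Set.mem_iInter.1 h1 ⟨γ, hs⟩
      · intro hx
        by_contra hs
        exact h2 (Set.mem_iUnion.2 ⟨⟨γ, by simpa using hs⟩, hx⟩)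
    · intro h
      refine ⟨Set.mem_iInter.2 fun γ => (h γ.1).1 γ.2, ?_⟩
      intro hx
      obtain ⟨γ, hxγ⟩ := Set.mem_iUnion.1 hx
      have := (h γ.1).2 hxγ
      simp [γ.2] at this
  ext x
  simp only [Set.mem_iUnion]
  constructor
  · intro hx
    refine ⟨fun γ => decide (x ∈ A γ.1), (key φ hΓφ x).1 hx, ?_⟩
    rw [hmem]
    intro γ; simp
  · rintro ⟨s, hsat, hxA⟩
    have hs : s = fun γ : Γ => decide (x ∈ A γ.1) := by
      funext γ
      have := (hmem s x).1 hxA γ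
      by_cases h : x ∈ A γ.1 <;> simp [h] at this ⊢ <;> simp [this]
    rw [hs] at hsat
    exact (key φ hΓφ x).2 hsat
end

section
/- Let κ ≤ λ be infinite cardinals with κ regular and uncountable, let ⟨A_δ : δ < 2^λ⟩ be a κ-independent family of subsets of λ (for every Γ ⊆ 2^λ with |Γ| < κ and every s : Γ → {0,1}, the set A(s) = (⋂_{α∈Γ, s(α)=1} A_α) \ (⋃_{β∈Γ, s(β)=0} A_β) is nonempty), and let ι be defined on L_{κ,1} propositional formulas over the variables {a_δ : δ < 2^λ} by ι(a_δ) = A_δ, ι(¬φ) = λ \ ι(φ), ι(⋀_{i<η} φ_i) = ⋂_{i<η} ι(φ_i). Then a formula φ is satisfiable (some truth assignment makes φ true) if and only if ι(φ) ≠ ∅. Consequently, if φ ↔ ψ is a tautology then ι(φ) = ι(ψ). -/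
open Cardinal

open Classical in
/-- Pointwise characterization of `interp`. -/
lemma interp_mem {V α : Type u} (A : V → Set α) (φ : PropForm V) (x : α) :
    x ∈ φ.interp A ↔ φ.Sat (fun δ => if x ∈ A δ then true else false) := by
  induction φ with
  | var y => simp [PropForm.interp, PropForm.Sat]
  | neg ψ ih => simp [PropForm.interp, PropForm.Sat, ih]
  | conj ι f ih => simp only [PropForm.interp, PropForm.Sat, Set.mem_iInter, ih]

lemma sat_congr {V : Type u} (φ : PropForm V) (v w : V → Bool)
    (h : ∀ x ∈ φ.vars, v x = w x) : φ.Sat v ↔ φ.Sat w := by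
  induction φ with
  | var y => simp [PropForm.Sat, h y (by simp [PropForm.vars])]
  | neg ψ ih => exact not_congr (ih h)
  | conj ι f ih =>
    refine forall_congr' fun i => ih i fun x hx => h x ?_
    exact Set.mem_iUnion.2 ⟨i, hx⟩

lemma vars_lt {V : Type u} {κ : Cardinal.{u}} (hreg : κ.IsRegular)
    (φ : PropForm V) (hφ : φ.Small κ) : #φ.vars < κ := by
  induction φ with
  | var y =>
    simp only [PropForm.vars, Cardinal.mk_fintype]
    exact lt_of_lt_of_le (by simpa using one_lt_aleph0) hreg.aleph0_le
  | neg ψ ih => exact ih hφ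
  | conj ι f ih =>
    obtain ⟨hι, hf⟩ := hφ
    calc #(⋃ i, (f i).vars) ≤ Cardinal.sum fun i => #((f i).vars) :=
          Cardinal.mk_iUnion_le_sum_mk
      _ < κ := Cardinal.sum_lt_of_isRegular hreg hι fun i => ih i (hf i)

/-- Let `κ ≤ lam` be infinite cardinals with `κ` regular and uncountable, let
`A : V → Set α` (with `|V| = 2 ^ lam`, `|α| = lam`) be a `κ`-independent family, and let
`ι = interp A` be the induced interpretation of `L_{κ,1}` formulas.  Then a formula `φ`
is satisfiable iff `ι(φ) ≠ ∅`; consequently, if `φ ↔ ψ` is a tautology then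
`ι(φ) = ι(ψ)`. -/
theorem statement4 {V α : Type u} (κ : Cardinal.{u})
    (hreg : κ.IsRegular) (hunc : ℵ₀ < κ) (hainf : ℵ₀ ≤ #α) (hka : κ ≤ #α)
    (hV : #V = 2 ^ #α) (A : V → Set α)
    (hind : ∀ (Γ : Set V), #Γ < κ → ∀ s : Γ → Bool, (Aset A Γ s).Nonempty)
    (φ : PropForm V) (hφ : φ.Small κ) :
    ((∃ v : V → Bool, φ.Sat v) ↔ φ.interp A ≠ ∅) ∧
    (∀ ψ : PropForm V, ψ.Small κ → (∀ v : V → Bool, (φ.Sat v ↔ ψ.Sat v)) →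
      φ.interp A = ψ.interp A) := by
  classical
  constructor
  · constructor
    · rintro ⟨v, hv⟩
      set Γ : Set V := φ.vars with hΓ
      obtain ⟨x, hx⟩ := hind Γ (vars_lt hreg φ hφ) (fun γ => v γ.1)
      rw [← Set.nonempty_iff_ne_empty]
      refine ⟨x, (interp_mem A φ x).2 ?_⟩
      refine (sat_congr φ v _ fun y hy => ?_).1 hv
      obtain ⟨hxI, hxU⟩ := hx
      by_cases hvy : v y = true
      · have : x ∈ A y := Set.mem_iInter.1 hxI ⟨⟨y, hy⟩, hvy⟩
        simp [this, hvy]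
      · have hvy' : v y = false := by simpa using hvy
        have : x ∉ A y := fun hmem => hxU (Set.mem_iUnion.2 ⟨⟨⟨y, hy⟩, hvy'⟩, hmem⟩)
        simp [this, hvy']
    · intro hne
      rw [← Set.nonempty_iff_ne_empty] at hne
      obtain ⟨x, hx⟩ := hne
      exact ⟨_, (interp_mem A φ x).1 hx⟩
  · intro ψ hψ hiff
    ext x
    rw [interp_mem, interp_mem, hiff]
end

section
/- Let κ ≤ λ be cardinals with κ regular and uncountable and λ^{<κ} = λ, and suppose κ has the λ-filter extension property. Then every κ-consistent set Φ of L_{κ,1} propositional formulas over a set of at most 2^λ propositional variables is satisfiable. -/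
open Cardinal

/-- A filter `F` is `κ`-complete if it is closed under intersections of fewer than `κ`
of its members. -/
def IsKappaComplete (κ : Cardinal.{u}) {β : Type u} (F : Filter β) : Prop :=
  ∀ S : Set (Set β), #S < κ → S ⊆ F.sets → ⋂₀ S ∈ F

/-- `κ` has the `lam`-filter extension property if every `κ`-complete (proper) filter on
a set of size `lam` extends to a `κ`-complete ultrafilter. -/
def HasFilterExt (κ lam : Cardinal.{u}) : Prop :=
  ∀ (β : Type u), #β = lam → ∀ F : Filter β, F.NeBot → IsKappaComplete κ F →
    ∃ U : Ultrafilter β, (U : Filter β) ≤ F ∧ IsKappaComplete κ (U : Filter β)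

/- ### Auxiliary lemmas -/

/-- Counting subsets of size `< κ`. -/
theorem mk_small_set_le (X : Type u) (κ : Cardinal.{u}) :
    #{s : Set X // #s < κ} ≤ κ * ((max #X ℵ₀) ^< κ) := by
  classical
  have hinj : #{s : Set X // #s < κ} ≤
      #(Σ x : κ.ord.ToType,
        {t : Set X // #t ≤ (((Ordinal.ToType.mk (o := κ.ord)).symm x : Set.Iio κ.ord) : Ordinal).card}) := by
    refine Cardinal.mk_le_of_injective
      (f := fun s => ⟨Ordinal.ToType.mk (o := κ.ord) ⟨(#s.1).ord, Cardinal.ord_lt_ord.2 s.2⟩,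
        ⟨s.1, by rw [OrderIso.symm_apply_apply, Cardinal.card_ord]⟩⟩) ?_
    intro s₁ s₂ h
    have := congrArg (fun p : (Σ x : κ.ord.ToType,
      {t : Set X // #t ≤ (((Ordinal.ToType.mk (o := κ.ord)).symm x : Set.Iio κ.ord) : Ordinal).card}) =>
        (p.2.1 : Set X)) h
    exact Subtype.ext this
  refine hinj.trans ?_
  rw [Cardinal.mk_sigma]
  have hle : ∀ x : κ.ord.ToType,
      #{t : Set X // #t ≤ (((Ordinal.ToType.mk (o := κ.ord)).symm x : Set.Iio κ.ord) : Ordinal).card}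
      ≤ (max #X ℵ₀) ^< κ := by
    intro x
    refine (Cardinal.mk_bounded_set_le X _).trans ?_
    refine Cardinal.le_powerlt _ ?_
    rw [← Cardinal.lt_ord]
    exact ((Ordinal.ToType.mk (o := κ.ord)).symm x).2
  calc (Cardinal.sum fun x : κ.ord.ToType =>
        #{t : Set X // #t ≤ (((Ordinal.ToType.mk (o := κ.ord)).symm x : Set.Iio κ.ord) : Ordinal).card})
      ≤ Cardinal.sum fun _ : κ.ord.ToType => (max #X ℵ₀) ^< κ := Cardinal.sum_le_sum _ _ hle
    _ = #(κ.ord.ToType) * ((max #X ℵ₀) ^< κ) := Cardinal.sum_const' _ _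
    _ = κ * ((max #X ℵ₀) ^< κ) := by rw [Cardinal.mk_ord_toType]

theorem powerlt_le_powerlt_base {a b c : Cardinal.{u}} (h : a ≤ b) : a ^< c ≤ b ^< c :=
  Cardinal.powerlt_le.2 fun x hx => (Cardinal.power_le_power_right h).trans (Cardinal.le_powerlt b hx)

theorem vars_small {V : Type u} {κ : Cardinal.{u}} (hreg : κ.IsRegular) :
    ∀ φ : PropForm V, φ.Small κ → #φ.vars < κ
  | .var x, _ => by
      simpa [PropForm.vars] using one_lt_aleph0.trans_le hreg.aleph0_le
  | .neg φ, h => vars_small hreg φ h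
  | .conj ι f, h => by
      refine lt_of_le_of_lt (Cardinal.mk_iUnion_le _) ?_
      exact Cardinal.mul_lt_of_lt hreg.aleph0_le h.1
        (Cardinal.iSup_lt_of_isRegular hreg h.1 fun i => vars_small hreg (f i) (h.2 i))

theorem mem_interp_iff {V Λ : Type u} (A : V → Set Λ) (δ : Λ) (v : V → Bool) :
    ∀ φ : PropForm V, (∀ x ∈ φ.vars, (δ ∈ A x ↔ v x = true)) →
      (δ ∈ φ.interp A ↔ φ.Sat v)
  | .var x, h => by
      simpa [PropForm.interp, PropForm.Sat] using h x (by simp [PropForm.vars])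
  | .neg φ, h => by
      simp only [PropForm.interp, PropForm.Sat, Set.mem_compl_iff]
      exact not_congr (mem_interp_iff A δ v φ h)
  | .conj ι f, h => by
      simp only [PropForm.interp, PropForm.Sat, Set.mem_iInter]
      exact forall_congr' fun i =>
        mem_interp_iff A δ v (f i) fun x hx => h x (Set.mem_iUnion.2 ⟨i, hx⟩)

theorem sat_iff_mem_ultra {V Λ : Type u} {κ : Cardinal.{u}} (A : V → Set Λ)
    (U : Ultrafilter Λ) (hU : IsKappaComplete κ (U : Filter Λ))
    (w : V → Bool) (hw : ∀ x, w x = true ↔ A x ∈ U) :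
    ∀ φ : PropForm V, φ.Small κ → (φ.Sat w ↔ φ.interp A ∈ U)
  | .var x, _ => by simpa [PropForm.Sat, PropForm.interp] using hw x
  | .neg φ, h => by
      have := sat_iff_mem_ultra A U hU w hw φ h
      simp only [PropForm.Sat, PropForm.interp, this]
      rw [← Ultrafilter.compl_mem_iff_notMem]
  | .conj ι f, h => by
      simp only [PropForm.Sat, PropForm.interp]
      constructor
      · intro hall
        have hmem : ∀ i, (f i).interp A ∈ U := fun i =>
          (sat_iff_mem_ultra A U hU w hw (f i) (h.2 i)).1 (hall i)
        have hsub : Set.range (fun i => (f i).interp A) ⊆ (U : Filter Λ).sets := by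
          rintro s ⟨i, rfl⟩; exact hmem i
        have := hU (Set.range fun i => (f i).interp A)
          (Cardinal.mk_range_le.trans_lt h.1) hsub
        rwa [Set.sInter_range] at this
      · intro hm i
        exact (sat_iff_mem_ultra A U hU w hw (f i) (h.2 i)).2
          ((U : Filter Λ).mem_of_superset hm (Set.iInter_subset _ i))

/-- Subsets of size `< κ`. -/
def SmallSet (X : Type u) (κ : Cardinal.{u}) : Type u := {s : Set X // #s < κ}

/-- Conditions for the Hausdorff independent family construction. -/
def Cond (Λ : Type u) (κ : Cardinal.{u}) : Type u :=
  SmallSet Λ κ × SmallSet (SmallSet Λ κ) κ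

def interOf {V Λ : Type u} {κ : Cardinal.{u}} (e : V ↪ Set Λ) (x : V)
    (p : SmallSet Λ κ) : SmallSet Λ κ :=
  ⟨e x ∩ p.1, lt_of_le_of_lt (Cardinal.mk_le_mk_of_subset Set.inter_subset_right) p.2⟩

/-- The `κ`-independent family of subsets of `Λ` indexed by `V`. -/
def Afam {V Λ : Type u} {κ : Cardinal.{u}} (e : V ↪ Set Λ) (j : Cond Λ κ ↪ Λ)
    (x : V) : Set Λ :=
  j '' {q : Cond Λ κ | interOf e x q.1 ∈ q.2.1}

theorem realize {V Λ : Type u} {κ : Cardinal.{u}} (hreg : κ.IsRegular)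
    (e : V ↪ Set Λ) (j : Cond Λ κ ↪ Λ) (Γ : Set V) (hΓ : #Γ < κ) (v : V → Bool) :
    ∃ δ : Λ, ∀ x ∈ Γ, (δ ∈ Afam e j x ↔ v x = true) := by
  classical
  have hsep : ∀ x y : V, e x ≠ e y → ∃ a : Λ, ¬ (a ∈ e x ↔ a ∈ e y) := by
    intro x y h
    by_contra hc
    push_neg at hc
    exact h (Set.ext fun a => hc a)
  let d : V → V → Set Λ := fun x y =>
    if h : e x ≠ e y then {Classical.choose (hsep x y h)} else ∅
  have hd1 : ∀ x y, #(d x y) ≤ 1 := by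
    intro x y
    simp only [d]
    split
    · simp
    · simp
  have hdmem : ∀ x y (h : e x ≠ e y),
      Classical.choose (hsep x y h) ∈ d x y ∧
      ¬ (Classical.choose (hsep x y h) ∈ e x ↔ Classical.choose (hsep x y h) ∈ e y) := by
    intro x y h
    refine ⟨?_, Classical.choose_spec (hsep x y h)⟩
    simp only [d, dif_pos h, Set.mem_singleton_iff]
  let p : Set Λ := ⋃ (x : Γ) (y : Γ), d x y
  have hone : (1 : Cardinal.{u}) < κ := one_lt_aleph0.trans_le hreg.aleph0_le
  have hp : #p < κ := by
    refine lt_of_le_of_lt (Cardinal.mk_iUnion_le _) ?_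
    refine Cardinal.mul_lt_of_lt hreg.aleph0_le hΓ ?_
    refine Cardinal.iSup_lt_of_isRegular hreg hΓ fun x => ?_
    refine lt_of_le_of_lt (Cardinal.mk_iUnion_le _) ?_
    refine Cardinal.mul_lt_of_lt hreg.aleph0_le hΓ ?_
    exact Cardinal.iSup_lt_of_isRegular hreg hΓ fun y => lt_of_le_of_lt (hd1 x y) hone
  let pS : SmallSet Λ κ := ⟨p, hp⟩
  let Z : Set (SmallSet Λ κ) := (fun x : V => interOf e x pS) '' {x | x ∈ Γ ∧ v x = true}
  have hZ : #Z < κ :=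
    lt_of_le_of_lt (Cardinal.mk_image_le.trans
      (Cardinal.mk_le_mk_of_subset fun x hx => hx.1)) hΓ
  let q : Cond Λ κ := (pS, ⟨Z, hZ⟩)
  refine ⟨j q, fun x hx => ?_⟩
  have hmem : j q ∈ Afam e j x ↔ interOf e x pS ∈ Z := by
    constructor
    · rintro ⟨q', hq', hjq⟩
      have : q' = q := j.injective hjq
      rw [this] at hq'
      exact hq'
    · intro h
      exact ⟨q, h, rfl⟩
  rw [hmem]
  constructor
  · rintro ⟨y, ⟨hyΓ, hy⟩, hxy⟩
    by_contra hvx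
    have hxyne : x ≠ y := by
      intro h; rw [h] at hvx; exact hvx hy
    have hexy : e y ≠ e x := fun h => hxyne (e.injective h.symm)
    obtain ⟨ha, hspec⟩ := hdmem y x hexy
    have hap : Classical.choose (hsep y x hexy) ∈ p := by
      refine Set.mem_iUnion.2 ⟨⟨y, hyΓ⟩, ?_⟩
      exact Set.mem_iUnion.2 ⟨⟨x, hx⟩, ha⟩
    have heq : e y ∩ p = e x ∩ p := congrArg Subtype.val hxy
    apply hspec
    constructor
    · intro h
      have : Classical.choose (hsep y x hexy) ∈ e x ∩ p := heq ▸ ⟨h, hap⟩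
      exact this.1
    · intro h
      have : Classical.choose (hsep y x hexy) ∈ e y ∩ p :=
        heq.symm ▸ (⟨h, hap⟩ : _ ∈ e x ∩ p)
      exact this.1
  · intro hvx
    exact ⟨x, ⟨hx, hvx⟩, rfl⟩

/-- Let `κ ≤ lam` be cardinals with `κ` regular and uncountable and `lam ^< κ = lam`, and
suppose `κ` has the `lam`-filter extension property.  Then every `κ`-consistent set `Φ` of
`L_{κ,1}` propositional formulas over a set `V` of at most `2 ^ lam` propositional
variables is satisfiable. -/
theorem statement5 {V : Type u} (κ lam : Cardinal.{u})
    (hreg : κ.IsRegular) (hunc : ℵ₀ < κ) (hka : κ ≤ lam)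
    (hpow : lam ^< κ = lam) (hfe : HasFilterExt κ lam)
    (hV : #V ≤ 2 ^ lam)
    (Φ : Set (PropForm V)) (hsmall : ∀ φ ∈ Φ, φ.Small κ)
    (hcons : ∀ Φ' ⊆ Φ, #Φ' < Cardinal.lift.{u + 1} κ →
      ∃ v : V → Bool, ∀ φ ∈ Φ', φ.Sat v) :
    ∃ v : V → Bool, ∀ φ ∈ Φ, φ.Sat v := by
  classical
  set Λ : Type u := lam.out with hΛdef
  have hΛ : #Λ = lam := Cardinal.mk_out lam
  have hκ0 : ℵ₀ ≤ κ := hreg.aleph0_le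
  have hlam0 : ℵ₀ ≤ lam := hκ0.trans hka
  have hone : (1 : Cardinal.{u}) < κ := one_lt_aleph0.trans_le hκ0
  -- embedding of the variables into `Set Λ`
  have hV' : #V ≤ #(Set Λ) := by rw [Cardinal.mk_set, hΛ]; exact hV
  obtain ⟨e⟩ := (Cardinal.le_def V (Set Λ)).1 hV'
  -- embedding of the conditions into `Λ`
  have hsmall1 : #(SmallSet Λ κ) ≤ lam := by
    refine (mk_small_set_le Λ κ).trans ?_
    have hb : (max #Λ ℵ₀) ^< κ ≤ lam ^< κ :=
      powerlt_le_powerlt_base (max_le (le_of_eq hΛ) hlam0)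
    calc κ * ((max #Λ ℵ₀) ^< κ) ≤ κ * (lam ^< κ) := mul_le_mul_right hb κ
      _ = κ * lam := by rw [hpow]
      _ ≤ lam * lam := mul_le_mul_left hka lam
      _ = lam := Cardinal.mul_eq_self hlam0
  have hsmall2 : #(SmallSet (SmallSet Λ κ) κ) ≤ lam := by
    refine (mk_small_set_le (SmallSet Λ κ) κ).trans ?_
    have hb : (max #(SmallSet Λ κ) ℵ₀) ^< κ ≤ lam ^< κ :=
      powerlt_le_powerlt_base (max_le hsmall1 hlam0)
    calc κ * ((max #(SmallSet Λ κ) ℵ₀) ^< κ) ≤ κ * (lam ^< κ) := mul_le_mul_right hb κ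
      _ = κ * lam := by rw [hpow]
      _ ≤ lam * lam := mul_le_mul_left hka lam
      _ = lam := Cardinal.mul_eq_self hlam0
  have hCond : #(Cond Λ κ) ≤ #Λ := by
    have h1 : #(Cond Λ κ) = #(SmallSet Λ κ) * #(SmallSet (SmallSet Λ κ) κ) := by
      rw [show Cond Λ κ = (SmallSet Λ κ × SmallSet (SmallSet Λ κ) κ) from rfl]
      simp [Cardinal.mk_prod]
    rw [h1, hΛ]
    calc #(SmallSet Λ κ) * #(SmallSet (SmallSet Λ κ) κ) ≤ lam * lam :=
        mul_le_mul' hsmall1 hsmall2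
      _ = lam := Cardinal.mul_eq_self hlam0
  obtain ⟨j⟩ := (Cardinal.le_def (Cond Λ κ) Λ).1 hCond
  -- the interpretation family
  set A : V → Set Λ := Afam e j with hA
  set G : Set (Set Λ) := PropForm.interp A '' Φ with hG
  -- the κ-complete filter generated by the interpretations of Φ
  set F : Filter Λ :=
    { sets := {X | ∃ T : Set (Set Λ), T ⊆ G ∧ #T < κ ∧ ⋂₀ T ⊆ X}
      univ_sets := ⟨∅, Set.empty_subset _, by
        rw [Cardinal.mk_emptyCollection]
        exact aleph0_pos.trans hunc, Set.subset_univ _⟩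
      sets_of_superset := by
        rintro X Y ⟨T, hTG, hT, hTX⟩ hXY
        exact ⟨T, hTG, hT, hTX.trans hXY⟩
      inter_sets := by
        rintro X Y ⟨T1, h1G, h1, h1X⟩ ⟨T2, h2G, h2, h2Y⟩
        refine ⟨T1 ∪ T2, Set.union_subset h1G h2G,
          lt_of_le_of_lt (Cardinal.mk_union_le _ _) (Cardinal.add_lt_of_lt hκ0 h1 h2), ?_⟩
        rw [Set.sInter_union]
        exact Set.inter_subset_inter h1X h2Y } with hF
  have hmemF : ∀ X : Set Λ, X ∈ F ↔ ∃ T : Set (Set Λ), T ⊆ G ∧ #T < κ ∧ ⋂₀ T ⊆ X := by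
    intro X; rfl
  -- every small subfamily of G has nonempty intersection
  have hKey : ∀ T : Set (Set Λ), T ⊆ G → #T < κ → (⋂₀ T).Nonempty := by
    intro T hTG hT
    have hchoice : ∀ t : T, ∃ φ : PropForm V, φ ∈ Φ ∧ PropForm.interp A φ = (t : Set Λ) :=
      fun t => hTG t.2
    choose c hc1 hc2 using hchoice
    have hΦ' : Set.range c ⊆ Φ := by rintro _ ⟨t, rfl⟩; exact hc1 t
    have hcard : #(Set.range c) < Cardinal.lift.{u + 1} κ := by
      have h1 : Cardinal.lift.{u} #(Set.range c) ≤ Cardinal.lift.{u + 1} #(↥T) :=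
        Cardinal.mk_range_le_lift
      rw [Cardinal.lift_id'.{u, u + 1}] at h1
      exact h1.trans_lt (Cardinal.lift_lt.2 hT)
    obtain ⟨v, hv⟩ := hcons (Set.range c) hΦ' hcard
    set Γ : Set V := ⋃ t : T, (c t).vars with hΓdef
    have hΓ : #Γ < κ := by
      refine lt_of_le_of_lt (Cardinal.mk_iUnion_le _) ?_
      exact Cardinal.mul_lt_of_lt hκ0 hT (Cardinal.iSup_lt_of_isRegular hreg hT fun t =>
        vars_small hreg (c t) (hsmall _ (hc1 t)))
    obtain ⟨δ, hδ⟩ := realize hreg e j Γ hΓ v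
    refine ⟨δ, ?_⟩
    intro t ht
    have hmm : δ ∈ PropForm.interp A (c ⟨t, ht⟩) := by
      rw [mem_interp_iff A δ v (c ⟨t, ht⟩)
        (fun x hx => hδ x (Set.mem_iUnion.2 ⟨⟨t, ht⟩, hx⟩))]
      exact hv _ ⟨⟨t, ht⟩, rfl⟩
    rwa [hc2 ⟨t, ht⟩] at hmm
  -- F is proper and κ-complete
  have hFne : F.NeBot := by
    refine Filter.forall_mem_nonempty_iff_neBot.1 ?_
    intro X hX
    obtain ⟨T, hTG, hT, hTX⟩ := (hmemF X).1 hX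
    exact (hKey T hTG hT).mono hTX
  have hFcomp : IsKappaComplete κ F := by
    intro S hS hSF
    have h : ∀ s : S, ∃ T : Set (Set Λ), T ⊆ G ∧ #T < κ ∧ ⋂₀ T ⊆ (s : Set Λ) :=
      fun s => (hmemF s).1 (hSF s.2)
    choose T hTG hT hTs using h
    refine (hmemF _).2 ⟨⋃ s : S, T s, Set.iUnion_subset hTG, ?_, ?_⟩
    · refine lt_of_le_of_lt (Cardinal.mk_iUnion_le _) ?_
      exact Cardinal.mul_lt_of_lt hκ0 hS (Cardinal.iSup_lt_of_isRegular hreg hS hT)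
    · intro a ha
      intro s hs
      refine hTs ⟨s, hs⟩ (fun u hu => ha u ?_)
      exact Set.mem_iUnion.2 ⟨⟨s, hs⟩, hu⟩
  -- extend to a κ-complete ultrafilter
  obtain ⟨U, hUF, hUcomp⟩ := hfe Λ hΛ F hFne hFcomp
  refine ⟨fun x => decide (A x ∈ U), fun φ hφ => ?_⟩
  have hGF : PropForm.interp A φ ∈ F := by
    refine (hmemF _).2 ⟨{PropForm.interp A φ}, ?_, ?_, ?_⟩
    · exact Set.singleton_subset_iff.2 ⟨φ, hφ, rfl⟩
    · rw [Cardinal.mk_singleton]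
      exact hone
    · rw [Set.sInter_singleton]
  have hmemU : PropForm.interp A φ ∈ U := Ultrafilter.mem_coe.1 (hUF hGF)
  exact (sat_iff_mem_ultra A U hUcomp (fun x => decide (A x ∈ U))
    (fun x => by simp) φ (hsmall φ hφ)).2 hmemU
end

section
/- Let κ ≤ λ be cardinals with κ regular and uncountable. Suppose that every κ-consistent set of L_{κ,1} propositional formulas over a set of 2^λ propositional variables is satisfiable. Then κ has the λ-filter extension property: every κ-complete filter on λ extends to a κ-complete ultrafilter on λ. (Taking variables a_X for X ⊆ λ and the κ-consistent theory asserting a_X for X in the filter, closure under intersections of fewer than κ sets and supersets, and a_X ↔ ¬a_{λ\X}, any satisfying assignment yields such an ultrafilter.) -/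
open Cardinal

section Aux

open PropForm

variable {V : Type u}

/-- Binary conjunction. -/
def fand (φ ψ : PropForm V) : PropForm V :=
  .conj (ULift Bool) (fun b => if b.down then φ else ψ)

/-- Implication. -/
def fimp (φ ψ : PropForm V) : PropForm V := .neg (fand φ (.neg ψ))

lemma sat_fand {v : V → Bool} {φ ψ : PropForm V} :
    (fand φ ψ).Sat v ↔ φ.Sat v ∧ ψ.Sat v := by
  constructor
  · intro h
    exact ⟨by simpa using h ⟨true⟩, by simpa using h ⟨false⟩⟩
  · rintro ⟨h1, h2⟩ ⟨b⟩
    cases b <;> simpa [fand, PropForm.Sat]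

lemma sat_fimp {v : V → Bool} {φ ψ : PropForm V} :
    (fimp φ ψ).Sat v ↔ (φ.Sat v → ψ.Sat v) := by
  show ¬ (fand φ (.neg ψ)).Sat v ↔ _
  rw [sat_fand]
  show ¬ (_ ∧ ¬ ψ.Sat v) ↔ _
  tauto

lemma small_fand {κ : Cardinal.{u}} (hκ : ℵ₀ < κ) {φ ψ : PropForm V}
    (h1 : φ.Small κ) (h2 : ψ.Small κ) : (fand φ ψ).Small κ := by
  refine ⟨lt_trans (Cardinal.lt_aleph0_of_finite (ULift Bool)) hκ, ?_⟩
  rintro ⟨b⟩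
  cases b <;> simpa [fand]

lemma small_fimp {κ : Cardinal.{u}} (hκ : ℵ₀ < κ) {φ ψ : PropForm V}
    (h1 : φ.Small κ) (h2 : ψ.Small κ) : (fimp φ ψ).Small κ :=
  small_fand hκ h1 h2

end Aux

/-- Let `κ ≤ lam` be cardinals with `κ` regular and uncountable, and suppose that every
`κ`-consistent set of `L_{κ,1}` propositional formulas over a set of `2 ^ lam`
propositional variables is satisfiable.  Then `κ` has the `lam`-filter extension
property: every `κ`-complete (proper) filter on a set of size `lam` extends to a
`κ`-complete ultrafilter. -/
theorem statement6 (κ lam : Cardinal.{u})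
    (hreg : κ.IsRegular) (hunc : ℵ₀ < κ) (hka : κ ≤ lam)
    (hcompact : ∀ (V : Type u), #V = 2 ^ lam →
      ∀ Φ : Set (PropForm V), (∀ φ ∈ Φ, φ.Small κ) →
        (∀ Φ' ⊆ Φ, #Φ' < Cardinal.lift.{u + 1} κ → ∃ v : V → Bool, ∀ φ ∈ Φ', φ.Sat v) →
        ∃ v : V → Bool, ∀ φ ∈ Φ, φ.Sat v) :
    HasFilterExt κ lam := by
  intro β hβ F hne hFc
  classical
  -- The theory over variables `Set β`.
  set Φ : Set (PropForm (Set β)) :=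
    {φ | (∃ X ∈ F.sets, φ = .var X) ∨
         (∃ X : Set β, φ = .neg (fand (.var X) (.var Xᶜ))) ∨
         (∃ X : Set β, φ = .neg (fand (.neg (.var X)) (.neg (.var Xᶜ)))) ∨
         (∃ S : Set (Set β), #S < κ ∧
            φ = fimp (.conj (↥S) (fun i => .var i.1)) (.var (⋂₀ S))) ∨
         (∃ X Y : Set β, X ⊆ Y ∧ φ = fimp (.var X) (.var Y))} with hΦ
  have hV : #(Set β) = 2 ^ lam := by rw [Cardinal.mk_set, hβ]
  have hsmall : ∀ φ ∈ Φ, φ.Small κ := by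
    rintro φ (⟨X, _, rfl⟩ | ⟨X, rfl⟩ | ⟨X, rfl⟩ | ⟨S, hS, rfl⟩ | ⟨X, Y, _, rfl⟩)
    · trivial
    · exact small_fand hunc trivial trivial
    · exact small_fand hunc trivial trivial
    · exact small_fimp hunc ⟨hS, fun _ => trivial⟩ trivial
    · exact small_fimp hunc trivial trivial
  have hconsist : ∀ Φ' ⊆ Φ, #Φ' < Cardinal.lift.{u + 1} κ →
      ∃ v : Set β → Bool, ∀ φ ∈ Φ', φ.Sat v := by
    intro Φ' hsub hcard
    set T : Set (Set β) := {X | X ∈ F.sets ∧ PropForm.var X ∈ Φ'} with hT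
    have hTcard : #T < κ := by
      have hinj : Function.Injective
          (fun X : T => (⟨PropForm.var X.1, X.2.2⟩ : Φ')) := by
        rintro ⟨X, hX⟩ ⟨Y, hY⟩ h
        simp only [Subtype.mk.injEq, PropForm.var.injEq] at h
        exact Subtype.ext h
      have h1 : Cardinal.lift.{u + 1} #T ≤ Cardinal.lift.{u} #Φ' :=
        Cardinal.lift_mk_le'.mpr ⟨⟨_, hinj⟩⟩
      rw [Cardinal.lift_id'.{u, u + 1}] at h1
      exact Cardinal.lift_lt.mp (lt_of_le_of_lt h1 hcard)
    have hTmem : ⋂₀ T ∈ F := hFc T hTcard (fun X hX => hX.1)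
    obtain ⟨b, hb⟩ := Filter.nonempty_of_mem hTmem
    refine ⟨fun X => decide (b ∈ X), ?_⟩
    intro φ hφ
    rcases hsub hφ with ⟨X, hX, rfl⟩ | ⟨X, rfl⟩ | ⟨X, rfl⟩ | ⟨S, hS, rfl⟩ | ⟨X, Y, hXY, rfl⟩
    · have : X ∈ T := ⟨hX, hφ⟩
      simpa [PropForm.Sat] using hb X this
    · show ¬ _
      rw [sat_fand]
      simp [PropForm.Sat]
    · show ¬ _
      rw [sat_fand]
      simp [PropForm.Sat]
    · rw [sat_fimp]
      intro h
      have : ∀ i : S, b ∈ i.1 := fun i => by simpa [PropForm.Sat] using h i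
      simp only [PropForm.Sat, decide_eq_true_iff]
      exact fun Y hY => this ⟨Y, hY⟩
    · rw [sat_fimp]
      simp only [PropForm.Sat, decide_eq_true_iff]
      exact fun h => hXY h
  obtain ⟨v, hv⟩ := hcompact (Set β) hV Φ hsmall hconsist
  -- Extract the key facts from the satisfying assignment.
  have hmemF : ∀ X ∈ F, v X = true := fun X hX =>
    hv _ (Or.inl ⟨X, hX, rfl⟩)
  have hnotboth : ∀ X : Set β, ¬(v X = true ∧ v Xᶜ = true) := by
    intro X h
    have := hv _ (Or.inr (Or.inl ⟨X, rfl⟩))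
    rw [show PropForm.Sat v (.neg (fand (.var X) (.var Xᶜ))) = ¬ (fand (.var X) (.var Xᶜ)).Sat v from rfl, sat_fand] at this
    exact this ⟨h.1, h.2⟩
  have hor : ∀ X : Set β, v X = true ∨ v Xᶜ = true := by
    intro X
    have := hv _ (Or.inr (Or.inr (Or.inl ⟨X, rfl⟩)))
    rw [show PropForm.Sat v (.neg (fand (.neg (.var X)) (.neg (.var Xᶜ)))) = ¬ (fand (.neg (.var X)) (.neg (.var Xᶜ))).Sat v from rfl, sat_fand] at this
    by_contra hc
    push_neg at hc
    exact this ⟨fun h => hc.1 h, fun h => hc.2 h⟩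
  have hinter : ∀ S : Set (Set β), #S < κ → (∀ X ∈ S, v X = true) →
      v (⋂₀ S) = true := by
    intro S hS h
    have := hv _ (Or.inr (Or.inr (Or.inr (Or.inl ⟨S, hS, rfl⟩))))
    rw [sat_fimp] at this
    exact this (fun i => h i.1 i.2)
  have hsup : ∀ X Y : Set β, X ⊆ Y → v X = true → v Y = true := by
    intro X Y hXY h
    have := hv _ (Or.inr (Or.inr (Or.inr (Or.inr ⟨X, Y, hXY, rfl⟩))))
    rw [sat_fimp] at this
    exact this h
  -- Build the filter.
  have hpair : ∀ X Y : Set β, #({X, Y} : Set (Set β)) < κ := fun X Y =>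
    lt_trans ((Set.toFinite ({X, Y} : Set (Set β))).lt_aleph0) hunc
  let G : Filter β :=
    { sets := {X | v X = true}
      univ_sets := hmemF _ Filter.univ_mem
      sets_of_superset := fun {X Y} hX hXY => hsup X Y hXY hX
      inter_sets := fun {X Y} hX hY => by
        have := hinter {X, Y} (hpair X Y) (by rintro Z (rfl | rfl) <;> assumption)
        rwa [Set.sInter_pair] at this }
  have hGmem : ∀ X : Set β, X ∈ G ↔ v X = true := fun _ => Iff.rfl
  refine ⟨Ultrafilter.ofComplNotMemIff G (fun s => ?_), ?_, ?_⟩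
  · rw [hGmem, hGmem]
    constructor
    · intro h
      rcases hor s with h' | h'
      · exact h'
      · exact absurd h' h
    · intro h h'
      exact hnotboth s ⟨h, h'⟩
  · intro X hX
    exact hmemF X hX
  · intro S hS hsub
    exact hinter S hS (fun X hX => hsub hX)
end

section
/- Let κ ≤ λ be cardinals with κ regular and uncountable, λ^{<κ} = λ, and suppose κ has the λ-filter extension property. Then for every regular cardinal μ with κ ≤ μ ≤ 2^λ, the principle □(μ) fails: there is no □(μ)-sequence. -/
open Cardinal

/-- `β` is an accumulation (limit) point of the set of ordinals `C`:
every ordinal below `β` is exceeded by an element of `C` below `β`. -/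
def IsAccPt (β : Ordinal.{u}) (C : Set Ordinal.{u}) : Prop :=
  β ≠ 0 ∧ ∀ γ < β, ∃ c ∈ C, γ < c ∧ c < β

/-- `C` is a club (closed unbounded) subset of the ordinal `α`: `C ⊆ α`, `C` contains all
of its accumulation points below `α`, and `C` is unbounded in `α`. -/
def IsClubIn (C : Set Ordinal.{u}) (α : Ordinal.{u}) : Prop :=
  C ⊆ Set.Iio α ∧ (∀ β < α, IsAccPt β C → β ∈ C) ∧ ∀ γ < α, ∃ c ∈ C, γ < c

/-- `C` is a `□(μ)`-sequence (only the values of `C` at limit ordinals below `μ` are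
relevant): every `C α` is a club in `α`, the sequence is coherent at accumulation
points, and it has no thread. -/
def IsSquareSeq (μ : Ordinal.{u}) (C : Ordinal.{u} → Set Ordinal.{u}) : Prop :=
  (∀ α < μ, Order.IsSuccLimit α →
      IsClubIn (C α) α ∧ ∀ β < α, IsAccPt β (C α) → C β = C α ∩ Set.Iio β) ∧
  ¬ ∃ D : Set Ordinal.{u}, IsClubIn D μ ∧ ∀ β < μ, IsAccPt β D → C β = D ∩ Set.Iio β

/-- The square principle `□(μ)`: there exists a `□(μ)`-sequence. -/
def SquarePrinciple (μ : Ordinal.{u}) : Prop :=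
  ∃ C : Ordinal.{u} → Set Ordinal.{u}, IsSquareSeq μ C

/-! ### Auxiliary development -/

noncomputable section
namespace SqAux

universe u

open Ordinal Set

/-! #### Ordinal preliminaries -/

/-- The largest limit ordinal `≤ x` (or `0` if there is none). -/
def lfn (x : Ordinal.{u}) : Ordinal.{u} := sSup {y | y ≤ x ∧ Order.IsSuccLimit y}

theorem lfn_le (x : Ordinal.{u}) : lfn x ≤ x :=
  csSup_le' (fun _ hy => hy.1)

theorem limit_le_lfn {y x : Ordinal.{u}} (hy : Order.IsSuccLimit y) (h : y ≤ x) : y ≤ lfn x :=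
  le_csSup (Ordinal.bddAbove_iff_small.mpr (small_subset (s := Set.Iic x) (fun _ hz => hz.1)))
    ⟨h, hy⟩

theorem isLimit_intro {o : Ordinal.{u}} (h0 : o ≠ 0) (h : ∀ a < o, a + 1 < o) : Order.IsSuccLimit o := by
  rw [Ordinal.isSuccLimit_iff]
  exact ⟨h0, Order.isSuccPrelimit_of_succ_lt (fun a ha => by rw [Order.succ_eq_add_one]; exact h a ha)⟩

theorem lfn_isLimit {x : Ordinal.{u}} (hx : Ordinal.omega0 ≤ x) : Order.IsSuccLimit (lfn x) := by
  have hmem : Ordinal.omega0 ∈ {y | y ≤ x ∧ Order.IsSuccLimit y} := ⟨hx, Ordinal.isSuccLimit_omega0⟩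
  have hω : Ordinal.omega0 ≤ lfn x := limit_le_lfn Ordinal.isSuccLimit_omega0 hx
  refine isLimit_intro ?_ ?_
  · intro h0
    rw [h0] at hω
    exact Ordinal.omega0_ne_zero (le_antisymm (nonpos_iff_eq_zero.mp hω).le zero_le) |>.elim
  · intro a ha
    obtain ⟨y, hy, hay⟩ := exists_lt_of_lt_csSup ⟨_, hmem⟩ ha
    exact lt_of_lt_of_le (by simpa [Order.succ] using hy.2.succ_lt hay)
      (le_csSup (Ordinal.bddAbove_iff_small.mpr (small_subset (s := Set.Iic x) (fun _ hz => hz.1))) hy)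

theorem no_descending (f : ℕ → Ordinal.{u}) (h : ∀ n, f (n + 1) < f n) : False := by
  obtain ⟨n, hn⟩ := Ordinal.lt_wf.min_mem (Set.range f) ⟨f 0, Set.mem_range_self 0⟩
  exact Ordinal.lt_wf.not_lt_min _ (Set.mem_range_self (n + 1)) (hn ▸ h n)

end SqAux
/-! #### The context: a square sequence together with all the cardinal data -/

structure Ctx : Type (u + 1) where
  κ : Cardinal.{u}
  lam : Cardinal.{u}
  μ : Cardinal.{u}
  hreg : κ.IsRegular
  hunc : ℵ₀ < κ
  hka : κ ≤ lam
  hpow : lam ^< κ = lam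
  hμreg : μ.IsRegular
  hκμ : κ ≤ μ
  hμ2 : μ ≤ 2 ^ lam
  C : Ordinal.{u} → Set Ordinal.{u}
  hax : ∀ α < μ.ord, Order.IsSuccLimit α →
      IsClubIn (C α) α ∧ ∀ β < α, IsAccPt β (C α) → C β = C α ∩ Set.Iio β

namespace Ctx

variable (X : Ctx.{u})

theorem aleph0_le_mu : ℵ₀ ≤ X.μ := le_of_lt (lt_of_lt_of_le X.hunc X.hκμ)

theorem mu_ord_isLimit : Order.IsSuccLimit X.μ.ord := Cardinal.isSuccLimit_ord X.aleph0_le_mu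

theorem succ_lt_mu_ord {o : Ordinal.{u}} (h : o < X.μ.ord) : o + 1 < X.μ.ord := by
  simpa [Order.succ] using X.mu_ord_isLimit.succ_lt h

theorem omega0_lt_mu_ord : Ordinal.omega0 < X.μ.ord := by
  rw [Cardinal.lt_ord]
  simpa using lt_of_lt_of_le X.hunc X.hκμ

theorem add_omega0_lt_mu_ord {o : Ordinal.{u}} (h : o < X.μ.ord) :
    o + Ordinal.omega0 < X.μ.ord := by
  rw [Cardinal.lt_ord] at h ⊢
  rw [Ordinal.card_add]
  exact Cardinal.add_lt_of_lt X.aleph0_le_mu h (by simpa using lt_of_lt_of_le X.hunc X.hκμ)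

/-- The canonical carrier of order type `μ.ord`, in `Type u`. -/
def oT : Type u := X.μ.ord.ToType

instance : LinearOrder X.oT := by unfold oT; infer_instance

/-- The ordinal value of an element of the carrier. -/
def vl (x : X.oT) : Ordinal.{u} := ((Ordinal.ToType.mk (o := X.μ.ord)).symm x).1

theorem vl_lt (x : X.oT) : X.vl x < X.μ.ord := ((Ordinal.ToType.mk (o := X.μ.ord)).symm x).2

/-- The carrier element corresponding to an ordinal `< μ.ord`. -/
def ix {γ : Ordinal.{u}} (h : γ < X.μ.ord) : X.oT := Ordinal.ToType.mk (o := X.μ.ord) ⟨γ, h⟩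

@[simp] theorem vl_ix {γ : Ordinal.{u}} (h : γ < X.μ.ord) : X.vl (X.ix h) = γ := by
  unfold vl ix
  simp

/-- Truncation of an ordinal to `μ.ord` (with junk value `0`). -/
def clamp (y : Ordinal.{u}) : Ordinal.{u} := if y < X.μ.ord then y else 0

theorem clamp_lt (y : Ordinal.{u}) : X.clamp y < X.μ.ord := by
  unfold clamp
  split
  · assumption
  · exact X.mu_ord_isLimit.pos

theorem clamp_eq {y : Ordinal.{u}} (h : y < X.μ.ord) : X.clamp y = y := if_pos h

/-- Syntax for the definable functions used in the construction. -/
inductive DefT : Type u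
  | cst (x : X.oT)
  | idf
  | ell (t : DefT)
  | hg (x : X.oT) (s : DefT)
  | lw (t s : DefT)

/-- Evaluation of definable-function syntax. -/
def evalT : X.DefT → Ordinal.{u} → Ordinal.{u}
  | .cst x, _ => X.vl x
  | .idf, i => i
  | .ell t, i => SqAux.lfn (evalT t i)
  | .hg x s, i => X.clamp (sInf (X.C (evalT s i) ∩ Set.Ioi (X.vl x)))
  | .lw t s, i =>
      X.clamp (sInf {γ | γ < evalT t i ∧ X.C (evalT s i) ∩ Set.Ioo γ (evalT t i) = ∅})

theorem evalT_lt {t : X.DefT} {i : Ordinal.{u}} (hi : i < X.μ.ord) : X.evalT t i < X.μ.ord := by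
  induction t with
  | cst x => exact X.vl_lt x
  | idf => exact hi
  | ell t ht => exact lt_of_le_of_lt (SqAux.lfn_le _) ht
  | hg x s hs => exact X.clamp_lt _
  | lw t s ht hs => exact X.clamp_lt _

/-- Syntax for the measured subsets of `μ.ord`. -/
inductive Form : Type u
  | flt (s t : X.DefT)
  | fmem (s t : X.DefT)
  | facc (s t : X.DefT)
  | flim (t : X.DefT)
  | fand (f g : Form)
  | fnot (f : Form)

/-- Satisfaction of a form at a point `i < μ.ord`. -/
def holds : X.Form → Ordinal.{u} → Prop
  | .flt s t, i => X.evalT s i < X.evalT t i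
  | .fmem s t, i => X.evalT s i ∈ X.C (X.evalT t i)
  | .facc s t, i => IsAccPt (X.evalT s i) (X.C (X.evalT t i))
  | .flim t, i => Order.IsSuccLimit (X.evalT t i)
  | .fand f g, i => holds f i ∧ holds g i
  | .fnot f, i => ¬ holds f i

end Ctx
namespace Ctx

variable (X : Ctx.{u})

/-! #### The carrier of size `lam`, codes, and the independent family -/

theorem aleph0_le_lam : ℵ₀ ≤ X.lam := le_of_lt (lt_of_lt_of_le X.hunc X.hka)

theorem aleph0_le_kappa : ℵ₀ ≤ X.κ := le_of_lt X.hunc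

/-- The carrier type of cardinality `lam`. -/
def ι0 : Type u := Quotient.out X.lam

theorem mk_ι0 : #X.ι0 = X.lam := Cardinal.mk_out X.lam

theorem mk_set_ι0 : #(Set X.ι0) = 2 ^ X.lam := by rw [Cardinal.mk_set, X.mk_ι0]

theorem aleph0_le_two_pow : ℵ₀ ≤ 2 ^ X.lam :=
  le_trans X.aleph0_le_lam (le_trans (Cardinal.cantor X.lam).le (le_refl _))

/-- A pairing bijection on `Set ι0`. -/
def pr : Set X.ι0 × Set X.ι0 ≃ Set X.ι0 := by
  apply Classical.choice
  apply Cardinal.eq.mp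
  rw [Cardinal.mk_prod, Cardinal.lift_id, X.mk_set_ι0,
    ← Cardinal.power_add, Cardinal.add_eq_self X.aleph0_le_lam]

/-- An injection of `ℕ` into `Set ι0`, used for tagging. -/
def cn : ℕ ↪ Set X.ι0 := by
  apply Classical.choice
  apply Cardinal.lift_mk_le'.mp
  rw [Cardinal.mk_nat, Cardinal.lift_aleph0, Cardinal.aleph0_le_lift]
  rw [X.mk_set_ι0]
  exact X.aleph0_le_two_pow

/-- An injection of the carrier `oT` into `Set ι0`. -/
def co : X.oT ↪ Set X.ι0 := by
  apply Classical.choice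
  apply (Cardinal.le_def _ _).mp
  rw [X.mk_set_ι0]
  show #X.μ.ord.ToType ≤ _
  rw [Cardinal.mk_toType, Cardinal.card_ord]
  exact X.hμ2

/-- Injective coding of definable-function syntax by subsets of the carrier. -/
def encT : X.DefT → Set X.ι0
  | .cst x => X.pr (X.cn 0, X.co x)
  | .idf => X.pr (X.cn 1, X.cn 0)
  | .ell t => X.pr (X.cn 2, encT t)
  | .hg x s => X.pr (X.cn 3, X.pr (X.co x, encT s))
  | .lw t s => X.pr (X.cn 4, X.pr (encT t, encT s))

theorem encT_inj : Function.Injective X.encT := by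
  intro a b h
  induction a generalizing b <;> cases b <;>
    simp only [encT, Equiv.apply_eq_iff_eq, EmbeddingLike.apply_eq_iff_eq, Prod.mk.injEq] at h <;>
      first
        | rfl
        | exact absurd h.1 (by decide)
        | skip
  case cst.cst => rw [h.2]
  case ell.ell t ih t' => rw [ih h.2]
  case hg.hg x s ih x' s' => rw [h.2.1, ih h.2.2]
  case lw.lw t s iht ihs t' s' => rw [iht h.2.1, ihs h.2.2]

/-- Injective coding of forms by subsets of the carrier. -/
def encF : X.Form → Set X.ι0
  | .flt s t => X.pr (X.cn 5, X.pr (X.encT s, X.encT t))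
  | .fmem s t => X.pr (X.cn 6, X.pr (X.encT s, X.encT t))
  | .facc s t => X.pr (X.cn 7, X.pr (X.encT s, X.encT t))
  | .flim t => X.pr (X.cn 8, X.encT t)
  | .fand f g => X.pr (X.cn 9, X.pr (encF f, encF g))
  | .fnot f => X.pr (X.cn 10, encF f)

theorem encF_inj : Function.Injective X.encF := by
  intro a b h
  induction a generalizing b <;> cases b <;>
    simp only [encF, Equiv.apply_eq_iff_eq, EmbeddingLike.apply_eq_iff_eq, Prod.mk.injEq] at h <;>
      first
        | exact absurd h.1 (by decide)
        | skip
  case flt.flt => rw [X.encT_inj h.2.1, X.encT_inj h.2.2]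
  case fmem.fmem => rw [X.encT_inj h.2.1, X.encT_inj h.2.2]
  case facc.facc => rw [X.encT_inj h.2.1, X.encT_inj h.2.2]
  case flim.flim => rw [X.encT_inj h.2]
  case fand.fand f g ihf ihg f' g' => rw [ihf h.2.1, ihg h.2.2]
  case fnot.fnot f ih f' => rw [ih h.2]

end Ctx
namespace Ctx

variable (X : Ctx.{u})

/-- There are at most `lam` subsets of size `< κ` of a set of size `≤ lam`. -/
theorem smallsub (α : Type u) (hα : #α ≤ X.lam) : #{s : Set α // #s < X.κ} ≤ X.lam := by
  set I := X.κ.ord.ToType with hI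
  set ov : I → Ordinal.{u} := fun x => ((Ordinal.ToType.mk (o := X.κ.ord)).symm x).1 with hov
  have ovlt : ∀ x : I, ov x < X.κ.ord := fun x => ((Ordinal.ToType.mk (o := X.κ.ord)).symm x).2
  have hg : ∃ g : (Σ x : I, ((ov x).ToType → α)) → {s : Set α // #s < X.κ},
      Function.Surjective g := by
    refine ⟨fun p => ⟨Set.range p.2, ?_⟩, ?_⟩
    · refine lt_of_le_of_lt Cardinal.mk_range_le ?_
      rw [Cardinal.mk_toType]
      exact Cardinal.lt_ord.mp (ovlt p.1)
    · intro s
      have ho : (#s.1).ord < X.κ.ord := Cardinal.ord_lt_ord.mpr s.2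
      have hh : ov (Ordinal.ToType.mk (o := X.κ.ord) ⟨(#s.1).ord, ho⟩) = (#s.1).ord := by
        simp [hov]
      obtain ⟨e⟩ := Cardinal.eq.mp (show #((#s.1).ord.ToType) = #s.1 by
        rw [Cardinal.mk_toType, Cardinal.card_ord])
      set E := (Equiv.cast (congrArg Ordinal.ToType hh)).trans e with hE
      refine ⟨⟨_, fun y => (E y : α)⟩, ?_⟩
      apply Subtype.ext
      show Set.range (fun y => (E y : α)) = s.1
      have h1 : Set.range (fun y => (E y : α)) = Subtype.val '' Set.range E := by
        rw [← Set.range_comp]; rfl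
      rw [h1, E.surjective.range_eq, Set.image_univ, Subtype.range_coe]
  obtain ⟨g, hgs⟩ := hg
  refine le_trans (Cardinal.mk_le_of_surjective hgs) ?_
  rw [Cardinal.mk_sigma]
  have hone : ∀ x : I, #((ov x).ToType → α) ≤ X.lam := by
    intro x
    rw [Cardinal.mk_arrow, Cardinal.lift_id, Cardinal.lift_id, Cardinal.mk_toType]
    calc #α ^ (ov x).card ≤ X.lam ^ (ov x).card := Cardinal.power_le_power_right hα
      _ ≤ X.lam ^< X.κ := Cardinal.le_powerlt X.lam (Cardinal.lt_ord.mp (ovlt x))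
      _ = X.lam := X.hpow
  refine le_trans (Cardinal.sum_le_sum _ _ hone) ?_
  rw [Cardinal.sum_const', hI]
  rw [Cardinal.mk_toType, Cardinal.card_ord]
  rw [Cardinal.mul_eq_max X.aleph0_le_kappa X.aleph0_le_lam]
  exact max_le X.hka le_rfl

theorem two_pow_small_le {α : Type u} (hα : #α < X.κ) : #(Set α) ≤ X.lam := by
  rw [Cardinal.mk_set]
  calc (2 : Cardinal.{u}) ^ #α ≤ X.lam ^ #α :=
        Cardinal.power_le_power_right (le_trans (by exact_mod_cast (Cardinal.nat_lt_aleph0 2).le) X.aleph0_le_lam)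
    _ ≤ X.lam ^< X.κ := Cardinal.le_powerlt X.lam hα
    _ = X.lam := X.hpow

/-- The Hausdorff-style carrier on which the independent family lives. -/
def Carrier : Type u :=
  {q : Set X.ι0 × Set (Set X.ι0) // #q.1 < X.κ ∧ #q.2 < X.κ ∧ ∀ a ∈ q.2, a ⊆ q.1}

theorem mk_carrier_le : #X.Carrier ≤ X.lam := by
  have hg : ∃ g : (Σ s : {s : Set X.ι0 // #s < X.κ}, {G : Set (Set s.1) // #G < X.κ}) →
      X.Carrier, Function.Surjective g := by
    refine ⟨fun p => ⟨(p.1.1, (fun a : Set p.1.1 => (Subtype.val '' a : Set X.ι0)) '' p.2.1),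
      p.1.2, lt_of_le_of_lt Cardinal.mk_image_le p.2.2, ?_⟩, ?_⟩
    · rintro _ ⟨a, _, rfl⟩
      exact Subtype.coe_image_subset _ _
    · rintro ⟨⟨s, G⟩, hs, hG, hsub⟩
      refine ⟨⟨⟨s, hs⟩, ⟨(fun a : Set X.ι0 => (Subtype.val ⁻¹' a : Set s)) '' G,
        lt_of_le_of_lt Cardinal.mk_image_le hG⟩⟩, ?_⟩
      apply Subtype.ext
      simp only [Prod.mk.injEq]
      refine ⟨trivial, ?_⟩
      rw [← Set.image_comp]
      have : ∀ a ∈ G, ((fun a : Set X.ι0 => (Subtype.val '' (Subtype.val ⁻¹' a : Set s))) a) = a := by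
        intro a ha
        show Subtype.val '' (Subtype.val ⁻¹' a : Set s) = a
        rw [Subtype.image_preimage_coe]
        exact Set.inter_eq_self_of_subset_right (hsub a ha)
      calc (fun a : Set X.ι0 => Subtype.val '' (Subtype.val ⁻¹' a : Set s)) '' G
          = (fun a => a) '' G := Set.image_congr this
        _ = G := Set.image_id G
  obtain ⟨g, hgs⟩ := hg
  refine le_trans (Cardinal.mk_le_of_surjective hgs) ?_
  rw [Cardinal.mk_sigma]
  have hone : ∀ s : {s : Set X.ι0 // #s < X.κ}, #{G : Set (Set s.1) // #G < X.κ} ≤ X.lam :=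
    fun s => X.smallsub _ (X.two_pow_small_le s.2)
  refine le_trans (Cardinal.sum_le_sum _ _ hone) ?_
  rw [Cardinal.sum_const']
  refine le_trans (mul_le_mul' (X.smallsub _ (le_of_eq X.mk_ι0)) le_rfl) ?_
  exact le_of_eq (Cardinal.mul_eq_self X.aleph0_le_lam)

/-- Embedding of the Hausdorff carrier into the true carrier. -/
def ψ : X.Carrier ↪ X.ι0 :=
  Classical.choice ((Cardinal.le_def _ _).mp (le_trans X.mk_carrier_le (le_of_eq X.mk_ι0.symm)))

/-- The independent family, indexed by forms. -/
def Af (f : X.Form) : Set X.ι0 :=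
  X.ψ '' {q : X.Carrier | X.encF f ∩ q.1.1 ∈ q.1.2}

/-- `< κ`-independence of the family `Af`, with arbitrary prescribed patterns. -/
theorem indep (J : Set X.Form) (hJ : #J < X.κ) (p : X.Form → Prop) :
    ∃ z : X.ι0, ∀ f ∈ J, (z ∈ X.Af f ↔ p f) := by
  classical
  have hsep : ∀ q : {q : ↑J × ↑J // (q.1.1 : X.Form) ≠ q.2.1},
      ∃ z : X.ι0, z ∈ symmDiff (X.encF q.1.1.1) (X.encF q.1.2.1) :=
    fun q => Set.symmDiff_nonempty.mpr (fun h => q.2 (X.encF_inj h))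
  choose zf hzf using hsep
  set s : Set X.ι0 := Set.range zf with hs
  have hssmall : #s < X.κ := by
    refine lt_of_le_of_lt Cardinal.mk_range_le ?_
    refine lt_of_le_of_lt (Cardinal.mk_subtype_le _) ?_
    rw [Cardinal.mk_prod, Cardinal.lift_id]
    exact Cardinal.mul_lt_of_lt X.aleph0_le_kappa hJ hJ
  set G : Set (Set X.ι0) := (fun f : X.Form => X.encF f ∩ s) '' {f | f ∈ J ∧ p f} with hG
  have hGsmall : #G < X.κ := by
    refine lt_of_le_of_lt Cardinal.mk_image_le ?_
    exact lt_of_le_of_lt (Cardinal.mk_le_mk_of_subset (fun f hf => hf.1)) hJ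
  have hGsub : ∀ a ∈ G, a ⊆ s := by rintro _ ⟨f, _, rfl⟩; exact Set.inter_subset_right
  set q : X.Carrier := ⟨(s, G), hssmall, hGsmall, hGsub⟩ with hq
  refine ⟨X.ψ q, ?_⟩
  intro f hf
  have hmem : X.ψ q ∈ X.Af f ↔ X.encF f ∩ s ∈ G := by
    unfold Af
    rw [X.ψ.injective.mem_set_image]
    rfl
  rw [hmem]
  constructor
  · rintro ⟨f', ⟨hf', hpf'⟩, hff'⟩
    have hff2 : X.encF f' ∩ s = X.encF f ∩ s := hff'
    by_cases hfe : f' = f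
    · exact hfe ▸ hpf'
    · exfalso
      set qq : {q : ↑J × ↑J // (q.1.1 : X.Form) ≠ q.2.1} := ⟨(⟨f', hf'⟩, ⟨f, hf⟩), hfe⟩ with hqq
      have hz : zf qq ∈ s := Set.mem_range_self _
      have hsym := hzf qq
      have hiff : zf qq ∈ X.encF f' ↔ zf qq ∈ X.encF f := by
        constructor
        · intro h
          have h2 : zf qq ∈ X.encF f' ∩ s := ⟨h, hz⟩
          have h3 := hff2 ▸ h2
          exact h3.1
        · intro h
          have h2 : zf qq ∈ X.encF f ∩ s := ⟨h, hz⟩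
          have h3 := hff2 ▸ h2
          exact h3.1
      rcases Set.mem_symmDiff.mp hsym with h | h
      · exact h.2 (hiff.mp h.1)
      · exact h.2 (hiff.mpr h.1)
  · intro hpf
    exact ⟨f, ⟨hf, hpf⟩, rfl⟩

end Ctx
namespace Ctx

variable (X : Ctx.{u})

/-! #### The filter generated by the coherence requirements -/

/-- The form asserting `vl x < i`. -/
def unifF (x : X.oT) : X.Form := .flt (.cst x) .idf

/-- Generators of the filter. -/
inductive Gen : Type u
  | gand (f g : X.Form)
  | gnot (f : X.Form)
  | gunif (x : X.oT)
  | gempty (f : X.Form)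
  | gsig (φ : ℕ → X.Form)

open scoped Classical in
/-- Interpretation of a generator as a subset of the carrier. -/
def gset : X.Gen → Set X.ι0
  | .gand f g => {z | z ∈ X.Af (.fand f g) ↔ (z ∈ X.Af f ∧ z ∈ X.Af g)}
  | .gnot f => {z | z ∈ X.Af (.fnot f) ↔ z ∉ X.Af f}
  | .gunif x => X.Af (X.unifF x)
  | .gempty f => if ∀ i < X.μ.ord, ¬ X.holds f i then (X.Af f)ᶜ else Set.univ
  | .gsig φ => if ∀ i < X.μ.ord, ∃ n, ¬ X.holds (φ n) i then (⋂ n, X.Af (φ n))ᶜ else Set.univ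

/-- Forms mentioned in a generator. -/
def menF : X.Gen → Set X.Form
  | .gand f g => {Form.fand f g, f, g}
  | .gnot f => {Form.fnot f, f}
  | .gunif x => {X.unifF x}
  | .gempty f => {f}
  | .gsig φ => Set.range φ

theorem menF_countable (g : X.Gen) : #(X.menF g) ≤ ℵ₀ := by
  cases g with
  | gand f f' => simp only [menF]; exact (Set.toFinite _).countable.le_aleph0
  | gnot f => simp only [menF]; exact (Set.toFinite _).countable.le_aleph0
  | gunif x => simp only [menF]; exact (Set.toFinite _).countable.le_aleph0
  | gempty f => simp only [menF]; exact (Set.toFinite _).countable.le_aleph0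
  | gsig φ => exact (Set.countable_range φ).le_aleph0

/-- The key point : any `< κ` many generators have a common point. -/
theorem proper (J : Set X.Gen) (hJ : #J < X.κ) : (⋂ g ∈ J, X.gset g).Nonempty := by
  classical
  set M : Set X.Form := ⋃ g : ↥J, X.menF g.1 with hM
  have hMsmall : #M < X.κ := by
    refine lt_of_le_of_lt (Cardinal.mk_iUnion_le _) ?_
    refine Cardinal.mul_lt_of_lt X.aleph0_le_kappa hJ ?_
    refine lt_of_le_of_lt (ciSup_le' ?_) X.hunc
    intro g
    exact X.menF_countable g.1
  -- bound for unif parameters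
  set b : ↥J → Ordinal.{u} := fun g =>
    match g.1 with
    | .gunif x => X.vl x + 1
    | _ => 0 with hb
  have hblt : ∀ g : ↥J, b g < X.μ.ord := by
    intro g
    rcases g with ⟨g, hg⟩
    cases g <;> simp only [hb] <;>
      first
        | exact X.mu_ord_isLimit.pos
        | exact X.succ_lt_mu_ord (X.vl_lt _)
  set ξo : Ordinal.{u} := ⨆ g, b g with hξo
  have hξolt : ξo < X.μ.ord := by
    refine Ordinal.iSup_lt_ord ?_ hblt
    rw [X.hμreg.cof_eq]
    exact lt_of_lt_of_le hJ X.hκμ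
  obtain ⟨z, hz⟩ := X.indep M hMsmall (fun f => X.holds f ξo)
  refine ⟨z, ?_⟩
  simp only [Set.mem_iInter]
  intro g hg
  have hmen : ∀ f ∈ X.menF g, (z ∈ X.Af f ↔ X.holds f ξo) := by
    intro f hf
    exact hz f (Set.mem_iUnion.mpr ⟨⟨g, hg⟩, hf⟩)
  cases g with
  | gand f f' =>
      simp only [gset, Set.mem_setOf_eq]
      rw [hmen _ (by simp [menF]), hmen _ (by simp [menF]), hmen _ (by simp [menF])]
      exact Iff.rfl
  | gnot f =>
      simp only [gset, Set.mem_setOf_eq]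
      rw [hmen _ (by simp [menF]), hmen _ (by simp [menF])]
      exact Iff.rfl
  | gunif x =>
      simp only [gset]
      rw [hmen _ (by simp [menF])]
      show X.evalT (.cst x) ξo < X.evalT .idf ξo
      show X.vl x < ξo
      refine lt_of_lt_of_le (lt_add_one _) ?_
      exact Ordinal.le_iSup b ⟨.gunif x, hg⟩
  | gempty f =>
      simp only [gset]
      by_cases hcond : ∀ i < X.μ.ord, ¬ X.holds f i
      · rw [if_pos hcond]
        intro hmem
        exact hcond ξo hξolt ((hmen f (by simp [menF])).mp hmem)
      · rw [if_neg hcond]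
        exact Set.mem_univ z
  | gsig φ =>
      simp only [gset]
      by_cases hcond : ∀ i < X.μ.ord, ∃ n, ¬ X.holds (φ n) i
      · rw [if_pos hcond]
        obtain ⟨n, hn⟩ := hcond ξo hξolt
        intro hmem
        simp only [Set.mem_iInter] at hmem
        exact hn ((hmen (φ n) (Set.mem_range_self n)).mp (hmem n))
      · rw [if_neg hcond]
        exact Set.mem_univ z

/-- The filter `κ`-generated by the generators. -/
def FF : Filter X.ι0 where
  sets := {Z | ∃ J : Set X.Gen, #J < X.κ ∧ (⋂ g ∈ J, X.gset g) ⊆ Z}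
  univ_sets := ⟨∅, by
    rw [Cardinal.mk_emptyCollection]
    exact lt_of_lt_of_le Cardinal.aleph0_pos X.aleph0_le_kappa, by simp⟩
  sets_of_superset := by
    rintro Z W ⟨J, hJ, hsub⟩ hZW
    exact ⟨J, hJ, hsub.trans hZW⟩
  inter_sets := by
    rintro Z W ⟨J, hJ, hs⟩ ⟨J', hJ', hs'⟩
    refine ⟨J ∪ J', ?_, ?_⟩
    · exact lt_of_le_of_lt (Cardinal.mk_union_le _ _)
        (Cardinal.add_lt_of_lt X.aleph0_le_kappa hJ hJ')
    · rw [Set.biInter_union]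
      exact Set.inter_subset_inter hs hs'

theorem FF_neBot : X.FF.NeBot := by
  refine Filter.forall_mem_nonempty_iff_neBot.mp ?_
  rintro Z ⟨J, hJ, hsub⟩
  exact (X.proper J hJ).mono hsub

theorem FF_kc : IsKappaComplete X.κ X.FF := by
  intro S hS hsub
  classical
  choose Jf hJf hJsub using fun Z : ↥S => (hsub Z.2 : Z.1 ∈ X.FF.sets)
  refine ⟨⋃ Z : ↥S, Jf Z, ?_, ?_⟩
  · refine lt_of_le_of_lt Cardinal.mk_iUnion_le_sum_mk ?_
    exact Cardinal.sum_lt_of_isRegular X.hreg hS hJf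
  · intro z hz
    intro Z hZS
    refine hJsub ⟨Z, hZS⟩ ?_
    exact Set.biInter_subset_biInter_left (Set.subset_iUnion Jf ⟨Z, hZS⟩) hz

end Ctx
/-- A context extended by a `κ`-complete ultrafilter extending the filter `FF`. -/
structure UCtx.{u} extends Ctx.{u} where
  U : Ultrafilter toCtx.ι0
  hle : (U : Filter toCtx.ι0) ≤ toCtx.FF
  hkc : IsKappaComplete toCtx.κ (U : Filter toCtx.ι0)

namespace UCtx

variable (Y : UCtx.{u})

/-- The induced finitely-additive `κ`-complete measure on forms. -/
def V (f : Y.toCtx.Form) : Prop := Y.toCtx.Af f ∈ Y.U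

theorem gset_mem (g : Y.toCtx.Gen) : Y.toCtx.gset g ∈ Y.U := by
  refine Y.hle ?_
  show Y.toCtx.gset g ∈ Y.toCtx.FF
  refine ⟨{g}, ?_, ?_⟩
  · rw [Cardinal.mk_singleton]
    exact lt_of_lt_of_le Cardinal.one_lt_aleph0 (le_of_lt Y.toCtx.hunc)
  · simp

theorem Vand {f g : Y.toCtx.Form} : Y.V (.fand f g) ↔ (Y.V f ∧ Y.V g) := by
  have hg := Y.gset_mem (.gand f g)
  simp only [Ctx.gset] at hg
  constructor
  · intro h
    constructor
    · refine Filter.mem_of_superset (Filter.inter_mem h hg) ?_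
      rintro z ⟨h1, h2⟩
      exact (h2.mp h1).1
    · refine Filter.mem_of_superset (Filter.inter_mem h hg) ?_
      rintro z ⟨h1, h2⟩
      exact (h2.mp h1).2
  · rintro ⟨h1, h2⟩
    refine Filter.mem_of_superset (Filter.inter_mem (Filter.inter_mem h1 h2) hg) ?_
    rintro z ⟨⟨ha, hb⟩, h3⟩
    exact h3.mpr ⟨ha, hb⟩

theorem Vnot {f : Y.toCtx.Form} : Y.V (.fnot f) ↔ ¬ Y.V f := by
  have hg := Y.gset_mem (.gnot f)
  simp only [Ctx.gset] at hg
  constructor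
  · intro h hf
    obtain ⟨z, ⟨h1, h2⟩, h3⟩ :=
      Ultrafilter.nonempty_of_mem (Filter.inter_mem (Filter.inter_mem h hf) hg)
    exact (h3.mp h1) h2
  · intro h
    by_contra h2
    have hc1 : (Y.toCtx.Af (.fnot f))ᶜ ∈ Y.U := Ultrafilter.compl_mem_iff_notMem.mpr h2
    have hc2 : (Y.toCtx.Af f)ᶜ ∈ Y.U := Ultrafilter.compl_mem_iff_notMem.mpr h
    obtain ⟨z, ⟨h1', h2'⟩, h3⟩ :=
      Ultrafilter.nonempty_of_mem (Filter.inter_mem (Filter.inter_mem hc1 hc2) hg)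
    exact h1' (h3.mpr h2')

theorem Vempty {f : Y.toCtx.Form} (h : ∀ i < Y.toCtx.μ.ord, ¬ Y.toCtx.holds f i) :
    ¬ Y.V f := by
  have hg := Y.gset_mem (.gempty f)
  simp only [Ctx.gset] at hg
  rw [if_pos h] at hg
  exact Ultrafilter.compl_mem_iff_notMem.mp hg

theorem Vuna (x : Y.toCtx.oT) : Y.V (Y.toCtx.unifF x) := Y.gset_mem (.gunif x)

theorem Vsig {φ : ℕ → Y.toCtx.Form} (h : ∀ n, Y.V (φ n)) :
    ∃ i < Y.toCtx.μ.ord, ∀ n, Y.toCtx.holds (φ n) i := by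
  by_contra hc
  push_neg at hc
  have hg := Y.gset_mem (.gsig φ)
  simp only [Ctx.gset] at hg
  rw [if_pos hc] at hg
  have hint : ⋂₀ (Set.range fun n => Y.toCtx.Af (φ n)) ∈ (Y.U : Filter _) := by
    refine Y.hkc _ ?_ ?_
    · exact lt_of_le_of_lt (Set.countable_range _).le_aleph0 Y.toCtx.hunc
    · rintro _ ⟨n, rfl⟩
      exact h n
  rw [Set.sInter_range] at hint
  exact (Ultrafilter.compl_mem_iff_notMem.mp hg) hint

theorem Vsat {f : Y.toCtx.Form} (h : Y.V f) : ∃ i < Y.toCtx.μ.ord, Y.toCtx.holds f i := by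
  by_contra hc
  push_neg at hc
  exact Y.Vempty hc h

theorem Vmono {f g : Y.toCtx.Form}
    (h : ∀ i < Y.toCtx.μ.ord, Y.toCtx.holds f i → Y.toCtx.holds g i) (hf : Y.V f) : Y.V g := by
  by_contra hg
  have h1 : Y.V (.fand f (.fnot g)) := Y.Vand.mpr ⟨hf, Y.Vnot.mpr hg⟩
  obtain ⟨i, hi, hh⟩ := Y.Vsat h1
  have hh2 : Y.toCtx.holds f i ∧ ¬ Y.toCtx.holds g i := hh
  exact hh2.2 (h i hi hh2.1)

/-- Conjunction of a list of forms. -/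
def conjF : List Y.toCtx.Form → Y.toCtx.Form
  | [] => .fnot (.flt .idf .idf)
  | f :: l => .fand f (conjF l)

theorem holds_conjF (l : List Y.toCtx.Form) (i : Ordinal.{u}) :
    Y.toCtx.holds (Y.conjF l) i ↔ ∀ f ∈ l, Y.toCtx.holds f i := by
  induction l with
  | nil =>
      simp only [conjF, List.not_mem_nil, false_implies, implies_true, iff_true]
      show ¬ (i < i)
      exact lt_irrefl i
  | cons f l ih =>
      show Y.toCtx.holds f i ∧ Y.toCtx.holds (Y.conjF l) i ↔ _
      rw [ih]
      simp

theorem VconjF {l : List Y.toCtx.Form} (h : ∀ f ∈ l, Y.V f) : Y.V (Y.conjF l) := by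
  induction l with
  | nil =>
      refine Y.Vmono (f := Y.toCtx.unifF (Y.toCtx.ix Y.toCtx.mu_ord_isLimit.pos)) ?_
        (Y.Vuna _)
      intro i _ _
      show ¬ (i < i)
      exact lt_irrefl i
  | cons f l ih =>
      exact Y.Vand.mpr ⟨h f (by simp), ih (fun f' hf' => h f' (by simp [hf']))⟩

theorem VmonoL (l : List Y.toCtx.Form) (g : Y.toCtx.Form)
    (h : ∀ i < Y.toCtx.μ.ord, (∀ f ∈ l, Y.toCtx.holds f i) → Y.toCtx.holds g i)
    (hl : ∀ f ∈ l, Y.V f) : Y.V g := by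
  refine Y.Vmono (f := Y.conjF l) ?_ (Y.VconjF hl)
  intro i hi hc
  exact h i hi ((Y.holds_conjF l i).mp hc)

theorem VsatL (l : List Y.toCtx.Form) (hl : ∀ f ∈ l, Y.V f) :
    ∃ i < Y.toCtx.μ.ord, ∀ f ∈ l, Y.toCtx.holds f i := by
  obtain ⟨i, hi, h⟩ := Y.Vsat (Y.VconjF hl)
  exact ⟨i, hi, (Y.holds_conjF l i).mp h⟩

theorem Vem (f : Y.toCtx.Form) : Y.V f ∨ Y.V (.fnot f) := by
  by_cases h : Y.V f
  · exact Or.inl h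
  · exact Or.inr (Y.Vnot.mpr h)

end UCtx
namespace UCtx

variable (Y : UCtx.{u})

/-! #### The `V`-order on definable terms, and the weakly normal term `eT` -/

/-- Strict order modulo the measure. -/
def lt' (s t : Y.toCtx.DefT) : Prop := Y.V (.flt s t)

/-- The form expressing `V`-equality. -/
def eqF (s t : Y.toCtx.DefT) : Y.toCtx.Form := .fand (.fnot (.flt s t)) (.fnot (.flt t s))

/-- The constant term with value `γ`. -/
def cstF {γ : Ordinal.{u}} (h : γ < Y.toCtx.μ.ord) : Y.toCtx.DefT := .cst (Y.toCtx.ix h)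

@[simp] theorem evalT_cstF {γ : Ordinal.{u}} (h : γ < Y.toCtx.μ.ord) (i : Ordinal.{u}) :
    Y.toCtx.evalT (Y.cstF h) i = γ := by
  show Y.toCtx.vl (Y.toCtx.ix h) = γ
  exact Y.toCtx.vl_ix h

theorem Vtrue (g : Y.toCtx.Form) (h : ∀ i < Y.toCtx.μ.ord, Y.toCtx.holds g i) : Y.V g :=
  Y.Vmono (f := Y.toCtx.unifF (Y.toCtx.ix Y.toCtx.mu_ord_isLimit.pos)) (fun i hi _ => h i hi)
    (Y.Vuna _)

theorem lt'_cst_cst {γ δ : Ordinal.{u}} (hγ : γ < Y.toCtx.μ.ord) (hδ : δ < Y.toCtx.μ.ord)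
    (h : γ < δ) : Y.lt' (Y.cstF hγ) (Y.cstF hδ) := by
  refine Y.Vtrue _ ?_
  intro i hi
  show Y.toCtx.evalT (Y.cstF hγ) i < Y.toCtx.evalT (Y.cstF hδ) i
  rw [Y.evalT_cstF, Y.evalT_cstF]
  exact h

theorem lt'_trans {s t u : Y.toCtx.DefT} (h1 : Y.lt' s t) (h2 : Y.lt' t u) : Y.lt' s u := by
  refine Y.VmonoL [.flt s t, .flt t u] (.flt s u) ?_ ?_
  · intro i hi hall
    have a1 : Y.toCtx.evalT s i < Y.toCtx.evalT t i := hall (.flt s t) (by simp)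
    have a2 : Y.toCtx.evalT t i < Y.toCtx.evalT u i := hall (.flt t u) (by simp)
    exact lt_trans a1 a2
  · intro f hf
    fin_cases hf
    exacts [h1, h2]

theorem tri (s t : Y.toCtx.DefT) : Y.lt' s t ∨ Y.lt' t s ∨ Y.V (Y.eqF s t) := by
  rcases Y.Vem (.flt s t) with h | h
  · exact Or.inl h
  rcases Y.Vem (.flt t s) with h2 | h2
  · exact Or.inr (Or.inl h2)
  exact Or.inr (Or.inr (Y.Vand.mpr ⟨h, h2⟩))

theorem wf_min (S : Set Y.toCtx.DefT) (hS : S.Nonempty) :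
    ∃ t ∈ S, ∀ s ∈ S, ¬ Y.lt' s t := by
  by_contra hc
  push_neg at hc
  have hstep : ∀ z : ↥S, ∃ w : ↥S, Y.lt' w.1 z.1 := by
    intro z
    obtain ⟨s, hs, hlt⟩ := hc z.1 z.2
    exact ⟨⟨s, hs⟩, hlt⟩
  choose g hg using hstep
  set seq : ℕ → ↥S := fun n => g^[n] ⟨hS.some, hS.some_mem⟩ with hseq
  have hdec : ∀ n, Y.lt' (seq (n + 1)).1 (seq n).1 := by
    intro n
    have : seq (n + 1) = g (seq n) := Function.iterate_succ_apply' g n _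
    rw [this]
    exact hg (seq n)
  obtain ⟨i, hi, hall⟩ := Y.Vsig (φ := fun n => .flt (seq (n + 1)).1 (seq n).1) hdec
  exact SqAux.no_descending (fun n => Y.toCtx.evalT (seq n).1 i) (fun n => hall n)

/-- Unboundedness (modulo `V`) of a term. -/
def unb (t : Y.toCtx.DefT) : Prop := ∀ γ (h : γ < Y.toCtx.μ.ord), Y.lt' (Y.cstF h) t

theorem unb_idf : Y.unb .idf := fun γ h => Y.Vuna (Y.toCtx.ix h)

theorem e0spec : ∃ t ∈ {t | Y.unb t}, ∀ s ∈ {t | Y.unb t}, ¬ Y.lt' s t :=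
  Y.wf_min _ ⟨.idf, Y.unb_idf⟩

/-- A minimal unbounded term. -/
def e0 : Y.toCtx.DefT := Classical.choose Y.e0spec

theorem e0_unb : Y.unb Y.e0 := (Classical.choose_spec Y.e0spec).1

theorem e0_min : ∀ s, Y.unb s → ¬ Y.lt' s Y.e0 :=
  fun s hs => (Classical.choose_spec Y.e0spec).2 s hs

/-- The weakly normal term with limit values. -/
def eT : Y.toCtx.DefT := .ell Y.e0

theorem E1 {γ : Ordinal.{u}} (h : γ < Y.toCtx.μ.ord) : Y.lt' (Y.cstF h) Y.eT := by
  have h2 : γ + Ordinal.omega0 < Y.toCtx.μ.ord := Y.toCtx.add_omega0_lt_mu_ord h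
  refine Y.VmonoL [.flt (Y.cstF h2) Y.e0] _ ?_ (by
    intro f hf
    fin_cases hf
    exact Y.e0_unb _ h2)
  intro i hi hall
  have a1 : γ + Ordinal.omega0 < Y.toCtx.evalT Y.e0 i := by
    have a0 : Y.toCtx.evalT (Y.cstF h2) i < Y.toCtx.evalT Y.e0 i := hall (.flt (Y.cstF h2) Y.e0) (by simp)
    rwa [Y.evalT_cstF] at a0
  show Y.toCtx.evalT (Y.cstF h) i < SqAux.lfn (Y.toCtx.evalT Y.e0 i)
  rw [Y.evalT_cstF]
  have hlim : Order.IsSuccLimit (γ + Ordinal.omega0) := Ordinal.isSuccLimit_add γ Ordinal.isSuccLimit_omega0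
  have hle : γ + Ordinal.omega0 ≤ SqAux.lfn (Y.toCtx.evalT Y.e0 i) :=
    SqAux.limit_le_lfn hlim (le_of_lt a1)
  refine lt_of_lt_of_le ?_ hle
  calc γ < γ + 1 := lt_add_one γ
    _ ≤ γ + Ordinal.omega0 := add_le_add_right (Order.one_le_iff_pos.mpr Ordinal.omega0_pos) γ

theorem E2 : Y.V (.flim Y.eT) := by
  refine Y.VmonoL [.flt (Y.cstF Y.toCtx.omega0_lt_mu_ord) Y.e0] _ ?_ (by
    intro f hf
    fin_cases hf
    exact Y.e0_unb _ Y.toCtx.omega0_lt_mu_ord)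
  intro i hi hall
  have a1 : Ordinal.omega0 < Y.toCtx.evalT Y.e0 i := by
    have a0 : Y.toCtx.evalT (Y.cstF Y.toCtx.omega0_lt_mu_ord) i < Y.toCtx.evalT Y.e0 i :=
      hall (.flt (Y.cstF Y.toCtx.omega0_lt_mu_ord) Y.e0) (by simp)
    rwa [Y.evalT_cstF] at a0
  show Order.IsSuccLimit (SqAux.lfn (Y.toCtx.evalT Y.e0 i))
  exact SqAux.lfn_isLimit (le_of_lt a1)

theorem E3 {t : Y.toCtx.DefT} (h : Y.lt' t Y.eT) :
    ∃ γ, ∃ hγ : γ < Y.toCtx.μ.ord, Y.lt' t (Y.cstF hγ) := by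
  by_contra hc
  push_neg at hc
  have hu : Y.unb t := by
    intro γ hγ
    have hγ1 : γ + 1 < Y.toCtx.μ.ord := Y.toCtx.succ_lt_mu_ord hγ
    have hn : ¬ Y.lt' t (Y.cstF hγ1) := hc (γ + 1) hγ1
    rcases Y.tri t (Y.cstF hγ1) with h1 | h1 | h1
    · exact absurd h1 hn
    · exact Y.lt'_trans (Y.lt'_cst_cst hγ hγ1 (lt_add_one γ)) h1
    · refine Y.VmonoL [Y.eqF t (Y.cstF hγ1)] _ ?_ (by
        intro f hf
        fin_cases hf
        exact h1)
      intro i hi hall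
      have a1 := hall (Y.eqF t (Y.cstF hγ1)) (by simp)
      have a2 : ¬ (Y.toCtx.evalT t i < Y.toCtx.evalT (Y.cstF hγ1) i) ∧
          ¬ (Y.toCtx.evalT (Y.cstF hγ1) i < Y.toCtx.evalT t i) := a1
      have heq : Y.toCtx.evalT t i = γ + 1 := by
        have hee := le_antisymm (not_lt.mp a2.2) (not_lt.mp a2.1)
        rw [hee]
        exact Y.evalT_cstF _ i
      show Y.toCtx.evalT (Y.cstF hγ) i < Y.toCtx.evalT t i
      rw [Y.evalT_cstF, heq]
      exact lt_add_one γ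
  have hlt : Y.lt' t Y.e0 := by
    refine Y.VmonoL [.flt t Y.eT] _ ?_ (by
      intro f hf
      fin_cases hf
      exact h)
    intro i hi hall
    have a1 : Y.toCtx.evalT t i < SqAux.lfn (Y.toCtx.evalT Y.e0 i) :=
      hall (.flt t Y.eT) (by simp)
    exact lt_of_lt_of_le a1 (SqAux.lfn_le _)
  exact Y.e0_min t hu hlt

/-! #### The `Σ`-terms: minimal upper bounds of initial segments of constants -/

/-- Upper bounds (modulo `V`) of the constants below `β`. -/
def UBp {β : Ordinal.{u}} (hβ : β < Y.toCtx.μ.ord) (t : Y.toCtx.DefT) : Prop :=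
  ∀ γ (h : γ < β), Y.lt' (Y.cstF (h.trans hβ)) t

theorem UBp_cst {β : Ordinal.{u}} (hβ : β < Y.toCtx.μ.ord) : Y.UBp hβ (Y.cstF hβ) :=
  fun γ h => Y.lt'_cst_cst _ _ h

theorem sigspec {β : Ordinal.{u}} (hβ : β < Y.toCtx.μ.ord) :
    ∃ t ∈ {t | Y.UBp hβ t}, ∀ s ∈ {t | Y.UBp hβ t}, ¬ Y.lt' s t :=
  Y.wf_min _ ⟨Y.cstF hβ, Y.UBp_cst hβ⟩

/-- A minimal upper bound of the constants below `β`. -/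
def SigT {β : Ordinal.{u}} (hβ : β < Y.toCtx.μ.ord) : Y.toCtx.DefT :=
  Classical.choose (Y.sigspec hβ)

theorem SigT_ub {β : Ordinal.{u}} (hβ : β < Y.toCtx.μ.ord) : Y.UBp hβ (Y.SigT hβ) :=
  (Classical.choose_spec (Y.sigspec hβ)).1

theorem SigT_min {β : Ordinal.{u}} (hβ : β < Y.toCtx.μ.ord) :
    ∀ s, Y.UBp hβ s → ¬ Y.lt' s (Y.SigT hβ) :=
  fun s hs => (Classical.choose_spec (Y.sigspec hβ)).2 s hs

theorem SigT_lin {β : Ordinal.{u}} (hβ : β < Y.toCtx.μ.ord) (hlim : Order.IsSuccLimit β)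
    {s : Y.toCtx.DefT} (h : Y.lt' s (Y.SigT hβ)) :
    ∃ γ, ∃ hγ : γ < β, Y.lt' s (Y.cstF (hγ.trans hβ)) := by
  by_contra hc
  push_neg at hc
  have hu : Y.UBp hβ s := by
    intro γ hγ
    have hγ1 : γ + 1 < β := by simpa [Order.succ] using hlim.succ_lt hγ
    have hn : ¬ Y.lt' s (Y.cstF (hγ1.trans hβ)) := hc (γ + 1) hγ1
    rcases Y.tri s (Y.cstF (hγ1.trans hβ)) with h1 | h1 | h1
    · exact absurd h1 hn
    · exact Y.lt'_trans (Y.lt'_cst_cst _ _ (lt_add_one γ)) h1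
    · refine Y.VmonoL [Y.eqF s (Y.cstF (hγ1.trans hβ))] _ ?_ (by
        intro f hf
        fin_cases hf
        exact h1)
      intro i hi hall
      have a1 := hall (Y.eqF s (Y.cstF (hγ1.trans hβ))) (by simp)
      have a2 : ¬ (Y.toCtx.evalT s i < Y.toCtx.evalT (Y.cstF (hγ1.trans hβ)) i) ∧
          ¬ (Y.toCtx.evalT (Y.cstF (hγ1.trans hβ)) i < Y.toCtx.evalT s i) := a1
      have heq : Y.toCtx.evalT s i = γ + 1 := by
        have hee := le_antisymm (not_lt.mp a2.2) (not_lt.mp a2.1)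
        rw [hee]
        exact Y.evalT_cstF _ i
      show Y.toCtx.evalT (Y.cstF (hγ.trans hβ)) i < Y.toCtx.evalT s i
      rw [Y.evalT_cstF, heq]
      exact lt_add_one γ
  exact Y.SigT_min hβ s hu h

theorem SigT_le_eT {β : Ordinal.{u}} (hβ : β < Y.toCtx.μ.ord) : ¬ Y.lt' Y.eT (Y.SigT hβ) :=
  Y.SigT_min hβ Y.eT (fun γ h => Y.E1 _)

theorem SigT_le_cst {β : Ordinal.{u}} (hβ : β < Y.toCtx.μ.ord) :
    ¬ Y.lt' (Y.cstF hβ) (Y.SigT hβ) :=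
  Y.SigT_min hβ _ (Y.UBp_cst hβ)

end UCtx
namespace Ctx

variable (X : Ctx.{u})

theorem ax_club {α : Ordinal.{u}} (h : α < X.μ.ord) (hl : Order.IsSuccLimit α) : IsClubIn (X.C α) α :=
  (X.hax α h hl).1

theorem ax_coh {α : Ordinal.{u}} (h : α < X.μ.ord) (hl : Order.IsSuccLimit α) {β : Ordinal.{u}}
    (hβ : β < α) (hacc : IsAccPt β (X.C α)) : X.C β = X.C α ∩ Set.Iio β :=
  (X.hax α h hl).2 β hβ hacc

/-- Pointwise behaviour of the `hg` (least-element-above) terms. -/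
theorem hg_point {x : X.oT} {s : X.DefT} {i : Ordinal.{u}} (hi : i < X.μ.ord)
    (hlim : Order.IsSuccLimit (X.evalT s i)) (hgt : X.vl x < X.evalT s i) :
    X.evalT (.hg x s) i ∈ X.C (X.evalT s i) ∧ X.vl x < X.evalT (.hg x s) i ∧
      X.evalT (.hg x s) i < X.evalT s i := by
  have hclub := X.ax_club (X.evalT_lt hi (t := s)) hlim
  have hne : (X.C (X.evalT s i) ∩ Set.Ioi (X.vl x)).Nonempty := by
    obtain ⟨c, hc, hgtc⟩ := hclub.2.2 (X.vl x) hgt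
    exact ⟨c, hc, hgtc⟩
  have hmem := csInf_mem hne
  have hlt : sInf (X.C (X.evalT s i) ∩ Set.Ioi (X.vl x)) < X.evalT s i := hclub.1 hmem.1
  have hev : X.evalT (.hg x s) i = sInf (X.C (X.evalT s i) ∩ Set.Ioi (X.vl x)) :=
    X.clamp_eq (lt_trans hlt (X.evalT_lt hi))
  rw [hev]
  exact ⟨hmem.1, hmem.2, hlt⟩

end Ctx

namespace UCtx

variable (Y : UCtx.{u})

/-- The pressing-down term: the least element of `C (eT i)` above `γ`. -/
def hgT {γ : Ordinal.{u}} (h : γ < Y.toCtx.μ.ord) : Y.toCtx.DefT := .hg (Y.toCtx.ix h) Y.eT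

theorem HG1 {γ : Ordinal.{u}} (hγ : γ < Y.toCtx.μ.ord) :
    Y.V (.fmem (Y.hgT hγ) Y.eT) ∧ Y.lt' (Y.cstF hγ) (Y.hgT hγ) ∧ Y.lt' (Y.hgT hγ) Y.eT := by
  have hpt : ∀ i < Y.toCtx.μ.ord, Order.IsSuccLimit (Y.toCtx.evalT Y.eT i) →
      γ < Y.toCtx.evalT Y.eT i →
      (Y.toCtx.evalT (Y.hgT hγ) i ∈ Y.toCtx.C (Y.toCtx.evalT Y.eT i) ∧
       γ < Y.toCtx.evalT (Y.hgT hγ) i ∧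
       Y.toCtx.evalT (Y.hgT hγ) i < Y.toCtx.evalT Y.eT i) := by
    intro i hi hlim hgt
    have := Y.toCtx.hg_point (x := Y.toCtx.ix hγ) (s := Y.eT) hi hlim
      (by rwa [Y.toCtx.vl_ix])
    rwa [Y.toCtx.vl_ix] at this
  have hli : ∀ f ∈ [Ctx.Form.flim Y.eT, Ctx.Form.flt (Y.cstF hγ) Y.eT], Y.V f := by
    intro f hf
    fin_cases hf
    exacts [Y.E2, Y.E1 hγ]
  refine ⟨?_, ?_, ?_⟩ <;>
    refine Y.VmonoL [Ctx.Form.flim Y.eT, Ctx.Form.flt (Y.cstF hγ) Y.eT] _ ?_ hli <;>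
    · intro i hi hall
      have a1 : Order.IsSuccLimit (Y.toCtx.evalT Y.eT i) := hall (.flim Y.eT) (by simp)
      have a2 : Y.toCtx.evalT (Y.cstF hγ) i < Y.toCtx.evalT Y.eT i :=
        hall (.flt (Y.cstF hγ) Y.eT) (by simp)
      rw [Y.evalT_cstF] at a2
      have h3 := hpt i hi a1 a2
      first
        | exact h3.1
        | (show Y.toCtx.evalT (Y.cstF hγ) i < Y.toCtx.evalT (Y.hgT hγ) i
           rw [Y.evalT_cstF]; exact h3.2.1)
        | exact h3.2.2

end UCtx

namespace UCtx

variable (Y : UCtx.{u})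

theorem HG2 {γ : Ordinal.{u}} (hγ : γ < Y.toCtx.μ.ord) :
    ∃ ξ, ∃ hξ : ξ < Y.toCtx.μ.ord, Y.lt' (Y.hgT hγ) (Y.cstF hξ) := Y.E3 (Y.HG1 hγ).2.2

/-- One step of the recursion producing members of `D`. -/
def stepo (p : {o : Ordinal.{u} // o < Y.toCtx.μ.ord}) : {o : Ordinal.{u} // o < Y.toCtx.μ.ord} :=
  ⟨max (p.1 + 1) ((Y.HG2 p.2).choose + 1), by
    refine max_lt (Y.toCtx.succ_lt_mu_ord p.2) (Y.toCtx.succ_lt_mu_ord ?_)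
    exact (Y.HG2 p.2).choose_spec.choose⟩

theorem stepo_gt (p : {o : Ordinal.{u} // o < Y.toCtx.μ.ord}) : p.1 < (Y.stepo p).1 :=
  lt_of_lt_of_le (lt_add_one _) (le_max_left _ _)

theorem stepo_spec (p : {o : Ordinal.{u} // o < Y.toCtx.μ.ord}) :
    ∃ ξ, ∃ hξ : ξ < Y.toCtx.μ.ord, ξ < (Y.stepo p).1 ∧ Y.lt' (Y.hgT p.2) (Y.cstF hξ) := by
  obtain ⟨hξ, hlt⟩ := (Y.HG2 p.2).choose_spec
  exact ⟨(Y.HG2 p.2).choose, hξ,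
    lt_of_lt_of_le (lt_add_one _) (le_max_right _ _), hlt⟩

/-- The set `D` of "virtual accumulation points of the club at the virtual ordinal `eT`". -/
def Dset : Set Ordinal.{u} :=
  {β | ∃ h : β < Y.toCtx.μ.ord, Order.IsSuccLimit β ∧ ∀ γ (hγ : γ < β),
    ∃ (t : Y.toCtx.DefT) (ξ : Ordinal.{u}) (hξ : ξ < β),
      Y.V (.fmem t Y.eT) ∧ Y.lt' (Y.cstF (hγ.trans h)) t ∧ Y.lt' t (Y.cstF (hξ.trans h))}

theorem D_unbounded {γ0 : Ordinal.{u}} (hγ0 : γ0 < Y.toCtx.μ.ord) :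
    ∃ β ∈ Y.Dset, γ0 < β := by
  classical
  set seq : ℕ → {o : Ordinal.{u} // o < Y.toCtx.μ.ord} :=
    fun n => Y.stepo^[n] ⟨γ0 + 1, Y.toCtx.succ_lt_mu_ord hγ0⟩ with hseq
  have hseqS : ∀ n, seq (n + 1) = Y.stepo (seq n) :=
    fun n => Function.iterate_succ_apply' Y.stepo n _
  have hmono : ∀ n, (seq n).1 < (seq (n + 1)).1 := by
    intro n
    rw [hseqS n]
    exact Y.stepo_gt (seq n)
  have hmono' : ∀ m n, m < n → (seq m).1 < (seq n).1 := by
    intro m n h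
    induction n with
    | zero => omega
    | succ n ih =>
        rcases Nat.lt_succ_iff_lt_or_eq.mp h with h' | h'
        · exact lt_trans (ih h') (hmono n)
        · rw [h']
          exact hmono n
  set β : Ordinal.{u} := ⨆ n, (seq n).1 with hβ
  have hβμ : β < Y.toCtx.μ.ord := by
    refine Ordinal.iSup_lt_ord_lift ?_ (fun n => (seq n).2)
    rw [Cardinal.mk_nat, Cardinal.lift_aleph0, Y.toCtx.hμreg.cof_eq]
    exact lt_of_lt_of_le Y.toCtx.hunc Y.toCtx.hκμ
  have hle : ∀ n, (seq n).1 ≤ β := fun n => Ordinal.le_iSup (fun n => (seq n).1) n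
  have hlt : ∀ n, (seq n).1 < β := fun n => lt_of_lt_of_le (hmono n) (hle (n + 1))
  have hex : ∀ a < β, ∃ n, a < (seq n).1 := by
    intro a ha
    by_contra hc
    push_neg at hc
    exact absurd (ciSup_le' hc) (not_le.mpr ha)
  have hβlim : Order.IsSuccLimit β := by
    refine SqAux.isLimit_intro ?_ ?_
    · intro h0
      have := hlt 0
      rw [h0] at this
      exact absurd this (not_lt_of_ge zero_le)
    · intro a ha
      obtain ⟨n, hn⟩ := hex a ha
      calc a + 1 ≤ (seq n).1 := Order.add_one_le_of_lt hn
        _ < β := hlt n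
  refine ⟨β, ⟨hβμ, hβlim, ?_⟩, lt_of_lt_of_le (lt_add_one γ0) (hle 0)⟩
  intro γ hγ
  obtain ⟨n, hn⟩ := hex γ hγ
  obtain ⟨ξ, hξμ, hξstep, hltξ⟩ := Y.stepo_spec (seq n)
  have hξβ : ξ < β := by
    have h2 := hlt (n + 1)
    rw [hseqS n] at h2
    exact lt_trans hξstep h2
  refine ⟨Y.hgT (seq n).2, ξ, hξβ, (Y.HG1 (seq n).2).1, ?_, ?_⟩
  · exact Y.lt'_trans (Y.lt'_cst_cst _ _ hn) (Y.HG1 (seq n).2).2.1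
  · exact hltξ

end UCtx
namespace Ctx

variable (X : Ctx.{u})

/-- Pointwise behaviour of the `lw` (least witness of non-accumulation) terms. -/
theorem lw_point {t s : X.DefT} {i : Ordinal.{u}} (hi : i < X.μ.ord)
    (hna : ¬ IsAccPt (X.evalT t i) (X.C (X.evalT s i))) (hpos : 0 < X.evalT t i) :
    X.evalT (.lw t s) i < X.evalT t i ∧
      X.C (X.evalT s i) ∩ Set.Ioo (X.evalT (.lw t s) i) (X.evalT t i) = ∅ := by
  set x := X.evalT t i with hx
  set S := X.C (X.evalT s i) with hS
  have hwit : ∃ γ, γ < x ∧ S ∩ Set.Ioo γ x = ∅ := by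
    by_contra hc
    push_neg at hc
    refine hna ⟨hpos.ne', ?_⟩
    intro γ hγ
    obtain ⟨c, hc1⟩ := hc γ hγ
    exact ⟨c, hc1.1, hc1.2.1, hc1.2.2⟩
  set W := {γ | γ < x ∧ S ∩ Set.Ioo γ x = ∅} with hW
  have hne : W.Nonempty := by
    obtain ⟨γ, h1, h2⟩ := hwit
    exact ⟨γ, h1, h2⟩
  have hmem := csInf_mem hne
  have hval : X.evalT (.lw t s) i = sInf W := by
    show X.clamp (sInf W) = sInf W
    exact X.clamp_eq (lt_trans hmem.1 (X.evalT_lt hi))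
  rw [hval]
  exact ⟨hmem.1, hmem.2⟩

end Ctx

namespace UCtx

variable (Y : UCtx.{u})

/-- The `D`-property of an ordinal. -/
def Dprop {β : Ordinal.{u}} (hβ : β < Y.toCtx.μ.ord) : Prop :=
  ∀ γ (hγ : γ < β), ∃ (t : Y.toCtx.DefT) (ξ : Ordinal.{u}) (hξ : ξ < β),
    Y.V (.fmem t Y.eT) ∧ Y.lt' (Y.cstF (hγ.trans hβ)) t ∧ Y.lt' t (Y.cstF (hξ.trans hβ))

theorem Dset_iff {β : Ordinal.{u}} :
    β ∈ Y.Dset ↔ ∃ h : β < Y.toCtx.μ.ord, Order.IsSuccLimit β ∧ Y.Dprop h := Iff.rfl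

/-- Lemma A, variable version: the minimal upper bound is a virtual accumulation point
of the virtual club at `eT`. -/
theorem claimA {β2 : Ordinal.{u}} (hβ2 : β2 < Y.toCtx.μ.ord) (hlim2 : Order.IsSuccLimit β2)
    (hP : Y.Dprop hβ2) (hbe : Y.lt' (Y.SigT hβ2) Y.eT) :
    Y.V (.facc (Y.SigT hβ2) Y.eT) := by
  set b := Y.SigT hβ2 with hb
  rcases Y.Vem (.facc b Y.eT) with hacc | hnacc
  · exact hacc
  exfalso
  set w : Y.toCtx.DefT := .lw b Y.eT with hw
  have h0β2 : (0 : Ordinal.{u}) < β2 := hlim2.pos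
  have h0b : Y.lt' (Y.cstF (h0β2.trans hβ2)) b := Y.SigT_ub hβ2 0 h0β2
  -- step 1 : w < b
  have hwb : Y.lt' w b := by
    refine Y.VmonoL [.fnot (.facc b Y.eT), .flt (Y.cstF (h0β2.trans hβ2)) b] _ ?_ (by
      intro f hf
      fin_cases hf
      exacts [hnacc, h0b])
    intro i hi hall
    have a1 : ¬ IsAccPt (Y.toCtx.evalT b i) (Y.toCtx.C (Y.toCtx.evalT Y.eT i)) :=
      hall (.fnot (.facc b Y.eT)) (by simp)
    have a2 : Y.toCtx.evalT (Y.cstF (h0β2.trans hβ2)) i < Y.toCtx.evalT b i :=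
      hall (.flt (Y.cstF (h0β2.trans hβ2)) b) (by simp)
    rw [Y.evalT_cstF] at a2
    have := Y.toCtx.lw_point hi a1 a2
    exact this.1
  -- step 2
  obtain ⟨ξ, hξβ2, hwξ⟩ := Y.SigT_lin hβ2 hlim2 hwb
  -- step 3
  obtain ⟨t', ξ', hξ', hmem', hγt', ht'ξ'⟩ := hP ξ hξβ2
  -- step 4
  have ht'b : Y.lt' t' b := Y.lt'_trans ht'ξ' (Y.SigT_ub hβ2 ξ' hξ')
  -- step 5 : contradiction
  obtain ⟨i, hi, hall⟩ := Y.VsatL [.fnot (.facc b Y.eT), .flt (Y.cstF (h0β2.trans hβ2)) b,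
    .flt w (Y.cstF (hξβ2.trans hβ2)), .flt (Y.cstF (hξβ2.trans hβ2)) t', .fmem t' Y.eT,
    .flt t' b] (by
      intro f hf
      fin_cases hf
      exacts [hnacc, h0b, hwξ, hγt', hmem', ht'b])
  have a1 : ¬ IsAccPt (Y.toCtx.evalT b i) (Y.toCtx.C (Y.toCtx.evalT Y.eT i)) :=
    hall (.fnot (.facc b Y.eT)) (by simp)
  have a2 : Y.toCtx.evalT (Y.cstF (h0β2.trans hβ2)) i < Y.toCtx.evalT b i :=
    hall (.flt (Y.cstF (h0β2.trans hβ2)) b) (by simp)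
  rw [Y.evalT_cstF] at a2
  have a3 : Y.toCtx.evalT w i < Y.toCtx.evalT (Y.cstF (hξβ2.trans hβ2)) i :=
    hall (.flt w (Y.cstF (hξβ2.trans hβ2))) (by simp)
  rw [Y.evalT_cstF] at a3
  have a4 : Y.toCtx.evalT (Y.cstF (hξβ2.trans hβ2)) i < Y.toCtx.evalT t' i :=
    hall (.flt (Y.cstF (hξβ2.trans hβ2)) t') (by simp)
  rw [Y.evalT_cstF] at a4
  have a5 : Y.toCtx.evalT t' i ∈ Y.toCtx.C (Y.toCtx.evalT Y.eT i) :=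
    hall (.fmem t' Y.eT) (by simp)
  have a6 : Y.toCtx.evalT t' i < Y.toCtx.evalT b i := hall (.flt t' b) (by simp)
  have hlw := Y.toCtx.lw_point hi a1 a2
  have : Y.toCtx.evalT t' i ∈ Y.toCtx.C (Y.toCtx.evalT Y.eT i) ∩
      Set.Ioo (Y.toCtx.evalT w i) (Y.toCtx.evalT b i) :=
    ⟨a5, lt_trans a3 a4, a6⟩
  rw [hlw.2] at this
  exact this

/-- Lemma A, fixed version: the minimal upper bound is a virtual accumulation point
of the true club `C β2`. -/
theorem claimA' {β2 : Ordinal.{u}} (hβ2 : β2 < Y.toCtx.μ.ord) (hlim2 : Order.IsSuccLimit β2)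
    (hbc : Y.lt' (Y.SigT hβ2) (Y.cstF hβ2)) :
    Y.V (.facc (Y.SigT hβ2) (Y.cstF hβ2)) := by
  set b := Y.SigT hβ2 with hb
  rcases Y.Vem (.facc b (Y.cstF hβ2)) with hacc | hnacc
  · exact hacc
  exfalso
  set w : Y.toCtx.DefT := .lw b (Y.cstF hβ2) with hw
  have h0β2 : (0 : Ordinal.{u}) < β2 := hlim2.pos
  have h0b : Y.lt' (Y.cstF (h0β2.trans hβ2)) b := Y.SigT_ub hβ2 0 h0β2
  have hwb : Y.lt' w b := by
    refine Y.VmonoL [.fnot (.facc b (Y.cstF hβ2)), .flt (Y.cstF (h0β2.trans hβ2)) b] _ ?_ (by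
      intro f hf
      fin_cases hf
      exacts [hnacc, h0b])
    intro i hi hall
    have a1 : ¬ IsAccPt (Y.toCtx.evalT b i) (Y.toCtx.C (Y.toCtx.evalT (Y.cstF hβ2) i)) :=
      hall (.fnot (.facc b (Y.cstF hβ2))) (by simp)
    have a2 : Y.toCtx.evalT (Y.cstF (h0β2.trans hβ2)) i < Y.toCtx.evalT b i :=
      hall (.flt (Y.cstF (h0β2.trans hβ2)) b) (by simp)
    rw [Y.evalT_cstF] at a2
    exact (Y.toCtx.lw_point hi a1 a2).1
  obtain ⟨ξ, hξβ2, hwξ⟩ := Y.SigT_lin hβ2 hlim2 hwb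
  -- a true element of `C β2` above `ξ`
  have hclub := Y.toCtx.ax_club hβ2 hlim2
  obtain ⟨c, hcC, hξc⟩ := hclub.2.2 ξ hξβ2
  have hcβ2 : c < β2 := hclub.1 hcC
  have hcb : Y.lt' (Y.cstF (hcβ2.trans hβ2)) b := Y.SigT_ub hβ2 c hcβ2
  obtain ⟨i, hi, hall⟩ := Y.VsatL [.fnot (.facc b (Y.cstF hβ2)),
    .flt (Y.cstF (h0β2.trans hβ2)) b, .flt w (Y.cstF (hξβ2.trans hβ2)),
    .flt (Y.cstF (hcβ2.trans hβ2)) b] (by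
      intro f hf
      fin_cases hf
      exacts [hnacc, h0b, hwξ, hcb])
  have a1 : ¬ IsAccPt (Y.toCtx.evalT b i) (Y.toCtx.C (Y.toCtx.evalT (Y.cstF hβ2) i)) :=
    hall (.fnot (.facc b (Y.cstF hβ2))) (by simp)
  have a2 : Y.toCtx.evalT (Y.cstF (h0β2.trans hβ2)) i < Y.toCtx.evalT b i :=
    hall (.flt (Y.cstF (h0β2.trans hβ2)) b) (by simp)
  rw [Y.evalT_cstF] at a2
  have a3 : Y.toCtx.evalT w i < Y.toCtx.evalT (Y.cstF (hξβ2.trans hβ2)) i :=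
    hall (.flt w (Y.cstF (hξβ2.trans hβ2))) (by simp)
  rw [Y.evalT_cstF] at a3
  have a4 : Y.toCtx.evalT (Y.cstF (hcβ2.trans hβ2)) i < Y.toCtx.evalT b i :=
    hall (.flt (Y.cstF (hcβ2.trans hβ2)) b) (by simp)
  rw [Y.evalT_cstF] at a4
  have hlw := Y.toCtx.lw_point hi a1 a2
  have hcmem : c ∈ Y.toCtx.C (Y.toCtx.evalT (Y.cstF hβ2) i) ∩
      Set.Ioo (Y.toCtx.evalT w i) (Y.toCtx.evalT b i) := by
    rw [Y.evalT_cstF]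
    exact ⟨hcC, lt_trans a3 hξc, a4⟩
  rw [hlw.2] at hcmem
  exact hcmem

end UCtx
namespace UCtx

variable (Y : UCtx.{u})

/-- Transfer of virtual membership from the club at `eT` to the club at `SigT β2`. -/
theorem KL1 {β2 : Ordinal.{u}} (hβ2 : β2 < Y.toCtx.μ.ord) (hlim2 : Order.IsSuccLimit β2)
    (hP : Y.Dprop hβ2) {g : Y.toCtx.DefT} (hmem : Y.V (.fmem g Y.eT))
    (hgb : Y.lt' g (Y.SigT hβ2)) : Y.V (.fmem g (Y.SigT hβ2)) := by
  set b := Y.SigT hβ2 with hb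
  rcases Y.tri b Y.eT with hbe | heb | heq
  · have hacc := Y.claimA hβ2 hlim2 hP hbe
    refine Y.VmonoL [.facc b Y.eT, .flim Y.eT, .fmem g Y.eT, .flt g b, .flt b Y.eT] _ ?_ (by
      intro f hf
      fin_cases hf
      exacts [hacc, Y.E2, hmem, hgb, hbe])
    intro i hi hall
    have a1 : IsAccPt (Y.toCtx.evalT b i) (Y.toCtx.C (Y.toCtx.evalT Y.eT i)) :=
      hall (.facc b Y.eT) (by simp)
    have a2 : Order.IsSuccLimit (Y.toCtx.evalT Y.eT i) := hall (.flim Y.eT) (by simp)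
    have a3 : Y.toCtx.evalT g i ∈ Y.toCtx.C (Y.toCtx.evalT Y.eT i) :=
      hall (.fmem g Y.eT) (by simp)
    have a4 : Y.toCtx.evalT g i < Y.toCtx.evalT b i := hall (.flt g b) (by simp)
    have a5 : Y.toCtx.evalT b i < Y.toCtx.evalT Y.eT i := hall (.flt b Y.eT) (by simp)
    have hcoh := Y.toCtx.ax_coh (Y.toCtx.evalT_lt hi (t := Y.eT)) a2 a5 a1
    show Y.toCtx.evalT g i ∈ Y.toCtx.C (Y.toCtx.evalT b i)
    rw [hcoh]
    exact ⟨a3, a4⟩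
  · exact absurd heb (Y.SigT_le_eT hβ2)
  · refine Y.VmonoL [Y.eqF b Y.eT, .fmem g Y.eT] _ ?_ (by
      intro f hf
      fin_cases hf
      exacts [heq, hmem])
    intro i hi hall
    have a1 : ¬ (Y.toCtx.evalT b i < Y.toCtx.evalT Y.eT i) ∧
        ¬ (Y.toCtx.evalT Y.eT i < Y.toCtx.evalT b i) := hall (Y.eqF b Y.eT) (by simp)
    have a2 : Y.toCtx.evalT g i ∈ Y.toCtx.C (Y.toCtx.evalT Y.eT i) :=
      hall (.fmem g Y.eT) (by simp)
    have heqv : Y.toCtx.evalT b i = Y.toCtx.evalT Y.eT i :=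
      le_antisymm (not_lt.mp a1.2) (not_lt.mp a1.1)
    show Y.toCtx.evalT g i ∈ Y.toCtx.C (Y.toCtx.evalT b i)
    rw [heqv]
    exact a2

/-- Transfer of virtual membership from the club at `SigT β2` to the true club `C β2`. -/
theorem KL2 {β2 : Ordinal.{u}} (hβ2 : β2 < Y.toCtx.μ.ord) (hlim2 : Order.IsSuccLimit β2)
    {g : Y.toCtx.DefT} (hmem : Y.V (.fmem g (Y.SigT hβ2)))
    (hgb : Y.lt' g (Y.SigT hβ2)) : Y.V (.fmem g (Y.cstF hβ2)) := by
  set b := Y.SigT hβ2 with hb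
  rcases Y.tri b (Y.cstF hβ2) with hbc | hcb | heq
  · have hacc := Y.claimA' hβ2 hlim2 hbc
    refine Y.VmonoL [.facc b (Y.cstF hβ2), .fmem g b, .flt g b, .flt b (Y.cstF hβ2)] _ ?_ (by
      intro f hf
      fin_cases hf
      exacts [hacc, hmem, hgb, hbc])
    intro i hi hall
    have a1 : IsAccPt (Y.toCtx.evalT b i) (Y.toCtx.C (Y.toCtx.evalT (Y.cstF hβ2) i)) :=
      hall (.facc b (Y.cstF hβ2)) (by simp)
    have a2 : Y.toCtx.evalT g i ∈ Y.toCtx.C (Y.toCtx.evalT b i) :=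
      hall (.fmem g b) (by simp)
    have a4 : Y.toCtx.evalT b i < Y.toCtx.evalT (Y.cstF hβ2) i :=
      hall (.flt b (Y.cstF hβ2)) (by simp)
    rw [Y.evalT_cstF] at a1 a4
    have hcoh := Y.toCtx.ax_coh hβ2 hlim2 a4 a1
    show Y.toCtx.evalT g i ∈ Y.toCtx.C (Y.toCtx.evalT (Y.cstF hβ2) i)
    rw [Y.evalT_cstF]
    rw [hcoh] at a2
    exact a2.1
  · exact absurd hcb (Y.SigT_le_cst hβ2)
  · refine Y.VmonoL [Y.eqF b (Y.cstF hβ2), .fmem g b] _ ?_ (by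
      intro f hf
      fin_cases hf
      exacts [heq, hmem])
    intro i hi hall
    have a1 : ¬ (Y.toCtx.evalT b i < Y.toCtx.evalT (Y.cstF hβ2) i) ∧
        ¬ (Y.toCtx.evalT (Y.cstF hβ2) i < Y.toCtx.evalT b i) := hall (Y.eqF b (Y.cstF hβ2)) (by simp)
    have a2 : Y.toCtx.evalT g i ∈ Y.toCtx.C (Y.toCtx.evalT b i) :=
      hall (.fmem g b) (by simp)
    have heqv : Y.toCtx.evalT b i = Y.toCtx.evalT (Y.cstF hβ2) i :=
      le_antisymm (not_lt.mp a1.2) (not_lt.mp a1.1)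
    show Y.toCtx.evalT g i ∈ Y.toCtx.C (Y.toCtx.evalT (Y.cstF hβ2) i)
    rw [← heqv]
    exact a2

/-- The key lemma: any two members of `D` are related in the coherence order. -/
theorem keylemma {β1 β2 : Ordinal.{u}} (h1 : β1 ∈ Y.Dset) (h2 : β2 ∈ Y.Dset)
    (h12 : β1 < β2) : IsAccPt β1 (Y.toCtx.C β2) := by
  obtain ⟨hβ1, hlim1, hP1⟩ := h1
  obtain ⟨hβ2, hlim2, hP2⟩ := h2
  refine ⟨hlim1.pos.ne', ?_⟩
  intro γ hγβ1
  obtain ⟨t, ξ, hξβ1, hmem, hγt, htξ⟩ := hP1 γ hγβ1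
  have hξβ2 : ξ < β2 := lt_trans hξβ1 h12
  have htb : Y.lt' t (Y.SigT hβ2) := Y.lt'_trans htξ (Y.SigT_ub hβ2 ξ hξβ2)
  have hm1 : Y.V (.fmem t (Y.SigT hβ2)) := Y.KL1 hβ2 hlim2 hP2 hmem htb
  have hm2 : Y.V (.fmem t (Y.cstF hβ2)) := Y.KL2 hβ2 hlim2 hm1 htb
  obtain ⟨i, hi, hall⟩ := Y.VsatL [.fmem t (Y.cstF hβ2), .flt (Y.cstF (hγβ1.trans hβ1)) t,
    .flt t (Y.cstF (hξβ1.trans hβ1))] (by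
      intro f hf
      fin_cases hf
      exacts [hm2, hγt, htξ])
  have a1 : Y.toCtx.evalT t i ∈ Y.toCtx.C (Y.toCtx.evalT (Y.cstF hβ2) i) :=
    hall (.fmem t (Y.cstF hβ2)) (by simp)
  have a2 : Y.toCtx.evalT (Y.cstF (hγβ1.trans hβ1)) i < Y.toCtx.evalT t i :=
    hall (.flt (Y.cstF (hγβ1.trans hβ1)) t) (by simp)
  have a3 : Y.toCtx.evalT t i < Y.toCtx.evalT (Y.cstF (hξβ1.trans hβ1)) i :=
    hall (.flt t (Y.cstF (hξβ1.trans hβ1))) (by simp)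
  rw [Y.evalT_cstF] at a1 a2 a3
  exact ⟨Y.toCtx.evalT t i, a1, a2, lt_trans a3 hξβ1⟩

end UCtx
namespace UCtx

variable (Y : UCtx.{u})

theorem D_lt {β : Ordinal.{u}} (h : β ∈ Y.Dset) : β < Y.toCtx.μ.ord := h.choose

theorem D_lim {β : Ordinal.{u}} (h : β ∈ Y.Dset) : Order.IsSuccLimit β := h.choose_spec.1

theorem chain_coh {β1 β2 : Ordinal.{u}} (h1 : β1 ∈ Y.Dset) (h2 : β2 ∈ Y.Dset)
    (h12 : β1 < β2) : Y.toCtx.C β1 = Y.toCtx.C β2 ∩ Set.Iio β1 :=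
  Y.toCtx.ax_coh (Y.D_lt h2) (Y.D_lim h2) h12 (Y.keylemma h1 h2 h12)

/-- The thread. -/
def Tset : Set Ordinal.{u} := ⋃ β ∈ Y.Dset, Y.toCtx.C β

theorem Tseg {β' : Ordinal.{u}} (h : β' ∈ Y.Dset) : Y.Tset ∩ Set.Iio β' = Y.toCtx.C β' := by
  apply Set.eq_of_subset_of_subset
  · rintro x ⟨hxT, hxlt⟩
    obtain ⟨S, ⟨β'', rfl⟩, hS⟩ := hxT
    simp only [Set.mem_iUnion] at hS
    obtain ⟨h'', hx⟩ := hS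
    rcases lt_trichotomy β'' β' with hlt | heq | hgt
    · have := Y.chain_coh h'' h hlt
      rw [this] at hx
      exact hx.1
    · rw [← heq]
      exact hx
    · have := Y.chain_coh h h'' hgt
      rw [this]
      exact ⟨hx, hxlt⟩
  · intro x hx
    refine ⟨?_, ?_⟩
    · exact Set.mem_biUnion h hx
    · exact (Y.toCtx.ax_club (Y.D_lt h) (Y.D_lim h)).1 hx

theorem T_acc_seg {β β' : Ordinal.{u}} (hβ' : β' ∈ Y.Dset) (hββ' : β < β')
    (hacc : IsAccPt β Y.Tset) : IsAccPt β (Y.toCtx.C β') := by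
  refine ⟨hacc.1, ?_⟩
  intro γ hγ
  obtain ⟨c, hcT, hγc, hcβ⟩ := hacc.2 γ hγ
  have hc' : c ∈ Y.Tset ∩ Set.Iio β' := ⟨hcT, lt_trans hcβ hββ'⟩
  rw [Y.Tseg hβ'] at hc'
  exact ⟨c, hc', hγc, hcβ⟩

theorem thread : ∃ T : Set Ordinal.{u}, IsClubIn T Y.toCtx.μ.ord ∧
    ∀ β < Y.toCtx.μ.ord, IsAccPt β T → Y.toCtx.C β = T ∩ Set.Iio β := by
  refine ⟨Y.Tset, ⟨?_, ?_, ?_⟩, ?_⟩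
  · -- T ⊆ Iio μ.ord
    intro x hx
    obtain ⟨S, ⟨β'', rfl⟩, hS⟩ := hx
    simp only [Set.mem_iUnion] at hS
    obtain ⟨h'', hx⟩ := hS
    exact lt_trans ((Y.toCtx.ax_club (Y.D_lt h'') (Y.D_lim h'')).1 hx) (Y.D_lt h'')
  · -- closed
    intro β hβ hacc
    obtain ⟨β', hβ'D, hββ'⟩ := Y.D_unbounded hβ
    have haccC := Y.T_acc_seg hβ'D hββ' hacc
    have hmem : β ∈ Y.toCtx.C β' :=
      (Y.toCtx.ax_club (Y.D_lt hβ'D) (Y.D_lim hβ'D)).2.1 β hββ' haccC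
    exact Set.mem_biUnion hβ'D hmem
  · -- unbounded
    intro γ hγ
    obtain ⟨β', hβ'D, hγβ'⟩ := Y.D_unbounded hγ
    obtain ⟨c, hc, hγc⟩ := (Y.toCtx.ax_club (Y.D_lt hβ'D) (Y.D_lim hβ'D)).2.2 γ hγβ'
    exact ⟨c, Set.mem_biUnion hβ'D hc, hγc⟩
  · -- coherence
    intro β hβ hacc
    obtain ⟨β', hβ'D, hββ'⟩ := Y.D_unbounded hβ
    have haccC := Y.T_acc_seg hβ'D hββ' hacc
    have hcoh := Y.toCtx.ax_coh (Y.D_lt hβ'D) (Y.D_lim hβ'D) hββ' haccC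
    rw [hcoh, ← Y.Tseg hβ'D]
    ext x
    constructor
    · rintro ⟨⟨hxT, _⟩, hxβ⟩
      exact ⟨hxT, hxβ⟩
    · rintro ⟨hxT, hxβ⟩
      exact ⟨⟨hxT, lt_trans hxβ hββ'⟩, hxβ⟩

end UCtx
/-- Let `κ ≤ lam` be cardinals with `κ` regular and uncountable, `lam ^< κ = lam`, and
suppose `κ` has the `lam`-filter extension property.  Then for every regular cardinal `μ`
with `κ ≤ μ ≤ 2 ^ lam`, the principle `□(μ)` fails. -/
theorem statement9 (κ lam : Cardinal.{u})
    (hreg : κ.IsRegular) (hunc : ℵ₀ < κ) (hka : κ ≤ lam) (hpow : lam ^< κ = lam)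
    (hfe : HasFilterExt κ lam)
    (μ : Cardinal.{u}) (hμreg : μ.IsRegular) (hκμ : κ ≤ μ) (hμ2 : μ ≤ 2 ^ lam) :
    ¬ SquarePrinciple μ.ord := by
  rintro ⟨C, hax, hnothread⟩
  set X : Ctx.{u} := ⟨κ, lam, μ, hreg, hunc, hka, hpow, hμreg, hκμ, hμ2, C, hax⟩ with hX
  obtain ⟨U, hle, hkc⟩ := hfe X.ι0 X.mk_ι0 X.FF X.FF_neBot X.FF_kc
  set Y : UCtx.{u} := ⟨X, U, hle, hkc⟩ with hY
  obtain ⟨T, hclub, hcoh⟩ := Y.thread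
  exact hnothread ⟨T, hclub, hcoh⟩
end
end

section
/- Let κ ≤ λ be cardinals with κ regular and uncountable, λ^{<κ} = λ, and suppose κ has the λ-filter extension property. Let μ be a regular cardinal with κ ≤ μ ≤ 2^λ and let ρ < κ be a cardinal. If G is a graph whose vertex set has cardinality μ and every induced subgraph of G on a vertex set of cardinality less than κ has chromatic number at most ρ, then G has chromatic number at most ρ. -/
open Cardinal

/-- A graph `G` has chromatic number at most `ρ`: there is a proper coloring of its
vertices using a set of at most `ρ` colors. -/
def ChromaticNumberLE {V : Type u} (G : SimpleGraph V) (ρ : Cardinal.{u}) : Prop :=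
  ∃ (γ : Type u) (_ : #γ ≤ ρ), Nonempty (G.Coloring γ)

universe u

lemma mk_small_subsets_le_s12 {α : Type u} {κ lam : Cardinal.{u}}
    (hreg : κ.IsRegular) (hka : κ ≤ lam) (hpow : lam ^< κ = lam) (hα : #α ≤ lam) :
    #{s : Set α // #s < κ} ≤ lam := by
  have hκ0 : ℵ₀ ≤ κ := hreg.aleph0_le
  have hlaminf : ℵ₀ ≤ lam := hκ0.trans hka
  set tc : κ.ord.ToType → Cardinal.{u} :=
    fun b => (@Ordinal.typein κ.ord.ToType (· < ·) isWellOrder_lt b).card with htc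
  have htclt : ∀ b, tc b < κ := by
    intro b
    have h2 := Ordinal.typein_lt_self b
    exact Cardinal.lt_ord.mp h2
  have hcover : {s : Set α | #s < κ} = ⋃ b : κ.ord.ToType, {s : Set α | #s ≤ tc b} := by
    ext s
    simp only [Set.mem_setOf_eq, Set.mem_iUnion]
    constructor
    · intro hs
      have h1 : (#s).ord < @Ordinal.type κ.ord.ToType (· < ·) isWellOrder_lt := by
        rw [Ordinal.type_toType]
        exact Cardinal.ord_lt_ord.mpr hs
      obtain ⟨b, hb⟩ := @Ordinal.typein_surj κ.ord.ToType (· < ·) isWellOrder_lt _ h1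
      have h3 : tc b = #s := by rw [htc]; simp only; rw [hb, Cardinal.card_ord]
      exact ⟨b, h3.ge⟩
    · rintro ⟨b, hb⟩
      exact hb.trans_lt (htclt b)
  have heq : #{s : Set α // #s < κ} = #(↥(⋃ b : κ.ord.ToType, {s : Set α | #s ≤ tc b})) := by
    rw [← hcover]; rfl
  rw [heq]
  refine le_trans Cardinal.mk_iUnion_le_sum_mk ?_
  have hterm : ∀ b : κ.ord.ToType, #(↥{s : Set α | #s ≤ tc b}) ≤ lam := by
    intro b
    calc #(↥{s : Set α | #s ≤ tc b}) ≤ max #α ℵ₀ ^ tc b := mk_bounded_set_le α (tc b)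
      _ ≤ lam ^ tc b := Cardinal.power_le_power_right (max_le hα hlaminf)
      _ ≤ lam := Cardinal.powerlt_le.mp hpow.le (tc b) (htclt b)
  refine le_trans (Cardinal.sum_le_sum _ (fun _ => lam) hterm) ?_
  rw [Cardinal.sum_const', Cardinal.mk_ord_toType]
  calc κ * lam ≤ lam * lam := mul_le_mul_left hka lam
    _ = lam := Cardinal.mul_eq_self hlaminf

section SepFilter

variable {V L R : Type u} (κ : Cardinal.{u}) (hreg : κ.IsRegular)
  (G : SimpleGraph V) (g : L → V → R)

/-- The core set of indices separating all edges in `E`. -/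
def sepCore (E : Set (V × V)) : Set L := {α : L | ∀ p ∈ E, g α p.1 ≠ g α p.2}

lemma sepCore_mono {g : L → V → R} {E E' : Set (V × V)} (h : E ⊆ E') :
    sepCore g E' ⊆ sepCore g E := fun _ hα p hp => hα p (h hp)

/-- The `κ`-complete filter generated by edge-separating sets. -/
def sepFilter : Filter L where
  sets := {A | ∃ E : Set (V × V), #E < κ ∧ (∀ p ∈ E, G.Adj p.1 p.2) ∧ sepCore g E ⊆ A}
  univ_sets := by
    refine ⟨∅, ?_, by simp, Set.subset_univ _⟩
    rw [Cardinal.mk_emptyCollection]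
    exact (aleph0_pos.trans_le hreg.aleph0_le).trans_le le_rfl |>.trans_le le_rfl
  sets_of_superset := by
    rintro A B ⟨E, h1, h2, h3⟩ hAB
    exact ⟨E, h1, h2, h3.trans hAB⟩
  inter_sets := by
    rintro A B ⟨E1, h11, h12, h13⟩ ⟨E2, h21, h22, h23⟩
    refine ⟨E1 ∪ E2, ?_, ?_, ?_⟩
    · exact (Cardinal.mk_union_le _ _).trans_lt
        (Cardinal.add_lt_of_lt hreg.aleph0_le h11 h21)
    · rintro p (hp | hp)
      exacts [h12 p hp, h22 p hp]
    · intro α hα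
      exact ⟨h13 (sepCore_mono Set.subset_union_left hα),
        h23 (sepCore_mono Set.subset_union_right hα)⟩

variable {κ G g}

lemma mem_sepFilter_of_adj (hreg : κ.IsRegular) {v w : V} (h : G.Adj v w) :
    {α : L | g α v ≠ g α w} ∈ sepFilter κ hreg G g := by
  refine ⟨{(v, w)}, ?_, ?_, ?_⟩
  · rw [Cardinal.mk_singleton]
    exact one_lt_aleph0.trans_le hreg.aleph0_le
  · rintro p rfl
    exact h
  · intro α hα
    exact hα (v, w) rfl

lemma sepFilter_neBot (hreg : κ.IsRegular)
    (hwit : ∀ E : Set (V × V), #E < κ → (∀ p ∈ E, G.Adj p.1 p.2) →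
      ∃ α : L, ∀ p ∈ E, g α p.1 ≠ g α p.2) :
    (sepFilter κ hreg G g).NeBot := by
  rw [Filter.neBot_iff]
  intro hbot
  have hmem : (∅ : Set L) ∈ sepFilter κ hreg G g := by rw [hbot]; exact Filter.mem_bot
  obtain ⟨E, h1, h2, h3⟩ := hmem
  obtain ⟨α, hα⟩ := hwit E h1 h2
  exact h3 hα

lemma sepFilter_complete (hreg : κ.IsRegular) :
    ∀ S : Set (Set L), #S < κ → S ⊆ (sepFilter κ hreg G g).sets →
      ⋂₀ S ∈ sepFilter κ hreg G g := by
  intro S hS hsub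
  have hch : ∀ A : S, ∃ E : Set (V × V), #E < κ ∧ (∀ p ∈ E, G.Adj p.1 p.2) ∧
      sepCore g E ⊆ (A : Set L) := fun A => hsub A.2
  choose E hE1 hE2 hE3 using hch
  refine ⟨⋃ A : S, E A, ?_, ?_, ?_⟩
  · exact Cardinal.mk_iUnion_le_sum_mk.trans_lt
      (Cardinal.sum_lt_of_isRegular hreg hS hE1)
  · intro p hp
    obtain ⟨A, hA⟩ := Set.mem_iUnion.mp hp
    exact hE2 A p hA
  · intro α hα
    intro A hA
    exact hE3 ⟨A, hA⟩ (sepCore_mono (Set.subset_iUnion E ⟨A, hA⟩) hα)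

end SepFilter

/-- Index type: pairs of a small set `t ⊆ L` and a small partial assignment of colors to
subsets of `t`. -/
def IdxT (κ : Cardinal.{u}) (L R : Type u) : Type u :=
  {p : Set L × Set (Set L × R) // #p.1 < κ ∧ #p.2 < κ ∧ ∀ q ∈ p.2, q.1 ⊆ p.1}

open scoped Classical in
/-- The coloring attempt attached to an index. -/
noncomputable def gfun {V L R : Type u} {κ : Cardinal.{u}} (e : V ↪ Set L) (r0 : R)
    (i : IdxT κ L R) (v : V) : R :=
  if h : ∃! r : R, (e v ∩ i.1.1, r) ∈ i.1.2 then h.choose else r0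

lemma gfun_eq {V L R : Type u} {κ : Cardinal.{u}} (e : V ↪ Set L) (r0 : R)
    (i : IdxT κ L R) (v : V) (r : R) (h1 : (e v ∩ i.1.1, r) ∈ i.1.2)
    (h2 : ∀ r', (e v ∩ i.1.1, r') ∈ i.1.2 → r' = r) :
    gfun e r0 i v = r := by
  have hex : ∃! r : R, (e v ∩ i.1.1, r) ∈ i.1.2 := ⟨r, h1, h2⟩
  rw [gfun, dif_pos hex]
  exact (h2 _ hex.choose_spec.1)

lemma mk_IdxT_le {L R : Type u} {κ lam : Cardinal.{u}}
    (hreg : κ.IsRegular) (hka : κ ≤ lam) (hpow : lam ^< κ = lam)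
    (hL : #L ≤ lam) (hR : #R ≤ lam) :
    #(IdxT κ L R) ≤ lam := by
  have hlaminf : ℵ₀ ≤ lam := hreg.aleph0_le.trans hka
  set SL := {x : Set L // #x < κ} with hSL
  set SD := {d : Set (SL × R) // #d < κ} with hSD
  have hΦ : ∃ Φ : IdxT κ L R → SL × SD, Function.Injective Φ := by
    have hsm : ∀ p : IdxT κ L R, #{q : SL × R | ((q.1 : Set L), q.2) ∈ p.1.2} < κ := by
      intro p
      refine lt_of_le_of_lt ?_ p.2.2.1
      refine Cardinal.mk_le_of_injective (f := fun q => (⟨((q.1.1 : Set L), q.1.2), q.2⟩ :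
        ↥p.1.2)) ?_
      rintro ⟨⟨x, r⟩, hq⟩ ⟨⟨x', r'⟩, hq'⟩ h
      simp only [Subtype.mk.injEq, Prod.mk.injEq] at h
      apply Subtype.ext
      simp only [Prod.mk.injEq]
      exact ⟨Subtype.ext h.1, h.2⟩
    refine ⟨fun p => (⟨p.1.1, p.2.1⟩, ⟨{q : SL × R | ((q.1 : Set L), q.2) ∈ p.1.2}, hsm p⟩), ?_⟩
    intro p p' h
    obtain ⟨h1, h2⟩ := Prod.mk.injEq .. ▸ h
    replace h1 : p.1.1 = p'.1.1 := congrArg Subtype.val h1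
    replace h2 : {q : SL × R | ((q.1 : Set L), q.2) ∈ p.1.2}
        = {q : SL × R | ((q.1 : Set L), q.2) ∈ p'.1.2} := congrArg Subtype.val h2
    apply Subtype.ext
    have hmem : ∀ (p : IdxT κ L R) (q : Set L × R), q ∈ p.1.2 → #q.1 < κ := by
      intro p q hq
      exact (Cardinal.mk_le_mk_of_subset (p.2.2.2 q hq)).trans_lt p.2.1
    have h3 : p.1.2 = p'.1.2 := by
      ext q
      constructor
      · intro hq
        have : (⟨⟨q.1, hmem p q hq⟩, q.2⟩ : SL × R) ∈
            {q : SL × R | ((q.1 : Set L), q.2) ∈ p.1.2} := hq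
        rw [h2] at this
        simpa using this
      · intro hq
        have : (⟨⟨q.1, hmem p' q hq⟩, q.2⟩ : SL × R) ∈
            {q : SL × R | ((q.1 : Set L), q.2) ∈ p'.1.2} := hq
        rw [← h2] at this
        simpa using this
    exact Prod.ext h1 h3

  obtain ⟨Φ, hΦinj⟩ := hΦ
  have hSLle : #SL ≤ lam := mk_small_subsets_le_s12 hreg hka hpow hL
  have hSDle : #SD ≤ lam := by
    refine mk_small_subsets_le_s12 hreg hka hpow ?_
    rw [Cardinal.mk_prod, Cardinal.lift_id, Cardinal.lift_id]
    calc #SL * #R ≤ lam * lam := mul_le_mul' hSLle hR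
      _ = lam := Cardinal.mul_eq_self hlaminf
  calc #(IdxT κ L R) ≤ #(SL × SD) := Cardinal.mk_le_of_injective hΦinj
    _ = #SL * #SD := by rw [Cardinal.mk_prod, Cardinal.lift_id, Cardinal.lift_id]
    _ ≤ lam * lam := mul_le_mul' hSLle hSDle
    _ = lam := Cardinal.mul_eq_self hlaminf
/-- Let `κ ≤ lam` be cardinals with `κ` regular and uncountable, `lam ^< κ = lam`, and
suppose `κ` has the `lam`-filter extension property.  Let `μ` be a regular cardinal with
`κ ≤ μ ≤ 2 ^ lam` and let `ρ < κ` be a cardinal.  If `G` is a graph on `μ` vertices all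
of whose induced subgraphs on fewer than `κ` vertices have chromatic number at most `ρ`,
then `G` has chromatic number at most `ρ`. -/
theorem statement12 (κ lam : Cardinal.{u})
    (hreg : κ.IsRegular) (hunc : ℵ₀ < κ) (hka : κ ≤ lam) (hpow : lam ^< κ = lam)
    (hfe : HasFilterExt κ lam)
    (μ : Cardinal.{u}) (hμreg : μ.IsRegular) (hκμ : κ ≤ μ) (hμ2 : μ ≤ 2 ^ lam)
    (ρ : Cardinal.{u}) (hρ : ρ < κ)
    {V : Type u} (hV : #V = μ) (G : SimpleGraph V)
    (hsub : ∀ s : Set V, #s < κ → ChromaticNumberLE (G.induce s) ρ) :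
    ChromaticNumberLE G ρ := by
  classical
  have hκ0 : ℵ₀ ≤ κ := hreg.aleph0_le
  have hlaminf : ℵ₀ ≤ lam := hκ0.trans hka
  set L := lam.out with hLdef
  set R := ρ.out with hRdef
  have hL : #L = lam := mk_out lam
  have hR : #R = ρ := mk_out ρ
  have hVle : #V ≤ #(Set L) := by rw [mk_set, hL, hV]; exact hμ2
  obtain ⟨e⟩ := (le_def V (Set L)).mp hVle
  -- proper colorings of small induced subgraphs, with values in `R`
  have hcol : ∀ s : Set V, #s < κ → ∃ c : s → R,
      ∀ x y : s, G.Adj x y → c x ≠ c y := by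
    intro s hs
    obtain ⟨γ, hγ, ⟨C⟩⟩ := hsub s hs
    obtain ⟨em⟩ := (le_def γ R).mp (by rw [hR]; exact hγ)
    refine ⟨fun x => em (C x), ?_⟩
    intro x y hxy hEq
    have hadj : (G.induce s).Adj x y := hxy
    exact (C.valid hadj) (em.injective hEq)
  have hVne : Nonempty V := by
    rw [← Cardinal.mk_ne_zero_iff (α := V), hV]
    exact (aleph0_pos.trans_le hμreg.aleph0_le).ne'
  obtain ⟨v0⟩ := hVne
  have hone : #({v0} : Set V) < κ := by
    rw [Cardinal.mk_singleton]
    exact one_lt_aleph0.trans_le hκ0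
  have hRne : Nonempty R := by
    obtain ⟨c, -⟩ := hcol {v0} hone
    exact ⟨c ⟨v0, Set.mem_singleton v0⟩⟩
  obtain ⟨r0⟩ := hRne
  -- the key witness property
  have hkey : ∀ s : Set V, #s < κ → ∃ i : IdxT κ L R,
      ∀ v ∈ s, ∀ w ∈ s, G.Adj v w → gfun e r0 i v ≠ gfun e r0 i w := by
    intro s hs
    obtain ⟨c, hc⟩ := hcol s hs
    have hLne : Nonempty L := by
      rw [← Cardinal.mk_ne_zero_iff (α := L), hL]
      exact (aleph0_pos.trans_le hlaminf).ne'
    obtain ⟨α0⟩ := hLne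
    have hsep : ∀ v w : V, v ≠ w → ∃ α : L, ¬(α ∈ e v ↔ α ∈ e w) := by
      intro v w hvw
      by_contra hno
      push_neg at hno
      refine hvw (e.injective ?_)
      ext α
      have := hno α
      tauto
    choose sep hsep using hsep
    set f : V × V → L := fun p => if h : p.1 ≠ p.2 then sep p.1 p.2 h else α0 with hf
    set t : Set L := f '' (s ×ˢ s) with htdef
    have ht : #t < κ := by
      refine lt_of_le_of_lt Cardinal.mk_image_le ?_
      have hps : #(s ×ˢ s : Set (V × V)) = #s * #s := by
        rw [Cardinal.mk_congr (Equiv.Set.prod s s), Cardinal.mk_prod, Cardinal.lift_id]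
      rw [hps]
      exact Cardinal.mul_lt_of_lt hκ0 hs hs
    set d : Set (Set L × R) := Set.range (fun x : s => (e (x : V) ∩ t, c x)) with hddef
    have hd : #d < κ := Cardinal.mk_range_le.trans_lt hs
    have hdsub : ∀ q ∈ d, q.1 ⊆ t := by
      rintro q ⟨x, rfl⟩
      exact Set.inter_subset_right
    set i : IdxT κ L R := ⟨(t, d), ht, hd, hdsub⟩ with hidef
    have htrace : ∀ (v w : V), v ∈ s → w ∈ s → e v ∩ t = e w ∩ t → v = w := by
      intro v w hv hw hEq
      by_contra hne
      have hft : f (v, w) ∈ t := Set.mem_image_of_mem f (Set.mem_prod.mpr ⟨hv, hw⟩)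
      have hfe2 : f (v, w) = sep v w hne := dif_pos hne
      have hiff := hsep v w hne
      rw [← hfe2] at hiff
      apply hiff
      constructor
      · intro hmem
        have hm : f (v, w) ∈ e v ∩ t := ⟨hmem, hft⟩
        rw [hEq] at hm
        exact hm.1
      · intro hmem
        have hm : f (v, w) ∈ e w ∩ t := ⟨hmem, hft⟩
        rw [← hEq] at hm
        exact hm.1
    have hgv : ∀ x : s, gfun e r0 i (x : V) = c x := by
      intro x
      refine gfun_eq e r0 i x (c x) ⟨x, rfl⟩ ?_
      rintro r' ⟨y, hy⟩
      obtain ⟨hy1, hy2⟩ := Prod.mk.injEq .. ▸ hy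
      have hyx : (y : V) = (x : V) := htrace _ _ y.2 x.2 hy1
      rw [← hy2]
      congr 1
      exact Subtype.ext hyx
    refine ⟨i, ?_⟩
    intro v hv w hw hadj hEq
    refine hc ⟨v, hv⟩ ⟨w, hw⟩ hadj ?_
    rw [← hgv ⟨v, hv⟩, ← hgv ⟨w, hw⟩]
    exact hEq
  -- cardinality of the index type and a surjective parametrization by `L`
  have hIle : #(IdxT κ L R) ≤ lam :=
    mk_IdxT_le hreg hka hpow hL.le (by rw [hR]; exact hρ.le.trans hka)
  have h0L : #(∅ : Set L) < κ := by
    rw [Cardinal.mk_emptyCollection]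
    exact aleph0_pos.trans_le hκ0
  have h0D : #(∅ : Set (Set L × R)) < κ := by
    rw [Cardinal.mk_emptyCollection]
    exact aleph0_pos.trans_le hκ0
  haveI hIne : Nonempty (IdxT κ L R) :=
    ⟨⟨(∅, ∅), h0L, h0D, fun q hq => absurd hq (Set.notMem_empty q)⟩⟩
  obtain ⟨emb⟩ := (le_def (IdxT κ L R) L).mp (by rw [hL]; exact hIle)
  set h : L → IdxT κ L R := Function.invFun emb with hhdef
  have hsur : Function.Surjective h := Function.invFun_surjective emb.injective
  set g : L → V → R := fun α v => gfun e r0 (h α) v with hgdef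
  -- the separating filter and its ultrafilter extension
  have hwit : ∀ E : Set (V × V), #E < κ → (∀ p ∈ E, G.Adj p.1 p.2) →
      ∃ α : L, ∀ p ∈ E, g α p.1 ≠ g α p.2 := by
    intro E hE hEadj
    set s : Set V := Prod.fst '' E ∪ Prod.snd '' E with hsdef
    have hscard : #s < κ := by
      refine (Cardinal.mk_union_le _ _).trans_lt (Cardinal.add_lt_of_lt hκ0 ?_ ?_)
      exacts [Cardinal.mk_image_le.trans_lt hE, Cardinal.mk_image_le.trans_lt hE]
    obtain ⟨i, hi⟩ := hkey s hscard
    obtain ⟨α, hα⟩ := hsur i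
    refine ⟨α, ?_⟩
    intro p hp
    have h1 : p.1 ∈ s := Set.mem_union_left _ ⟨p, hp, rfl⟩
    have h2 : p.2 ∈ s := Set.mem_union_right _ ⟨p, hp, rfl⟩
    have hsepa := hi p.1 h1 p.2 h2 (hEadj p hp)
    rw [hgdef]
    simpa only [hα] using hsepa
  have hneBot : (sepFilter κ hreg G g).NeBot := sepFilter_neBot hreg hwit
  have hcomp : IsKappaComplete κ (sepFilter κ hreg G g) := sepFilter_complete hreg
  obtain ⟨U, hUle, hUcomp⟩ := hfe L hL (sepFilter κ hreg G g) hneBot hcomp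
  -- pick colors by the ultrafilter
  have hcolor : ∀ v : V, ∃ r : R, {α : L | g α v = r} ∈ U := by
    intro v
    by_contra hno
    push_neg at hno
    have hS : ∀ r : R, {α : L | g α v = r}ᶜ ∈ U := fun r =>
      (Ultrafilter.compl_mem_iff_notMem).mpr (hno r)
    have hSsub : Set.range (fun r : R => {α : L | g α v = r}ᶜ) ⊆ (U : Filter L).sets := by
      rintro A ⟨r, rfl⟩
      exact hS r
    have hScard : #(Set.range (fun r : R => {α : L | g α v = r}ᶜ)) < κ :=
      Cardinal.mk_range_le.trans_lt (by rw [hR]; exact hρ)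
    have hint := hUcomp _ hScard hSsub
    have hempty : ⋂₀ Set.range (fun r : R => {α : L | g α v = r}ᶜ) = ∅ := by
      ext α
      simp only [Set.mem_sInter, Set.mem_range, Set.mem_empty_iff_false, iff_false]
      intro hall
      exact (hall _ ⟨g α v, rfl⟩) rfl
    rw [hempty] at hint
    exact Filter.empty_notMem (U : Filter L) hint
  choose col hcolmem using hcolor
  refine ⟨R, by rw [hR], ⟨SimpleGraph.Coloring.mk col ?_⟩⟩
  intro v w hadj hEq
  have hmem : {α : L | g α v ≠ g α w} ∈ U := hUle (mem_sepFilter_of_adj hreg hadj)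
  have hmem2 := Filter.inter_mem (Filter.inter_mem (hcolmem v) (hcolmem w)) hmem
  obtain ⟨α, ⟨⟨ha1, ha2⟩, ha3⟩⟩ := Filter.nonempty_of_mem hmem2
  apply ha3
  show g α v = g α w
  rw [ha1, ha2, hEq]
end
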